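/- arXiv:2201.03838 — 8 statements merged into one kernel-verified Lean document; each statement's English description precedes it below -/
import Mathlib

section
/- Let n ≥ 1, let a₁, …, aₙ ∈ ℂ be pairwise distinct, let c₁, …, cₙ ∈ ℂ \ {0}, and let g ∈ ℂ(z) be the derivative of a rational function (i.e. g = (r′s − rs′)/s² for some polynomials r, s ∈ ℂ[z] with s ≠ 0). Set f = g + Σ_{i=1}^{n} cᵢ/(z − aᵢ) ∈ ℂ(z). Then the stabilizer G = {(a, b) ∈ (ℂ \ {0}) × ℂ : σ_{a,b}(f) = f} of f under precomposition by affine transformations is finite of cardinality at most n. -/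
open Polynomial

noncomputable section

def IsDerivRF (h : RatFunc ℂ) : Prop :=
  ∃ r s : Polynomial ℂ, s ≠ 0 ∧
    h = algebraMap (Polynomial ℂ) (RatFunc ℂ) (derivative r * s - r * derivative s)
        / algebraMap (Polynomial ℂ) (RatFunc ℂ) (s ^ 2)

lemma residues_vanish (h : RatFunc ℂ) (hh : IsDerivRF h) (T : Finset ℂ) (d : ℂ → ℂ)
    (heq : h = ∑ x ∈ T, RatFunc.C (d x) / (RatFunc.X - RatFunc.C x)) :
    ∀ x ∈ T, d x = 0 := by
  classical
  obtain ⟨r, s, hs, hrs⟩ := hh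
  set ι := algebraMap (Polynomial ℂ) (RatFunc ℂ) with hι
  set φ : RatFunc ℂ := ι r / ι s with hφ
  set r₀ := φ.num with hr₀
  set s₀ := φ.denom with hs₀def
  have hs₀ : s₀ ≠ 0 := φ.denom_ne_zero
  have hιs : ι s ≠ 0 := RatFunc.algebraMap_ne_zero hs
  have hιs₀ : ι s₀ ≠ 0 := RatFunc.algebraMap_ne_zero hs₀
  have hcross : r * s₀ = r₀ * s := by
    apply RatFunc.algebraMap_injective ℂ
    rw [map_mul, map_mul]
    rw [← div_eq_div_iff hιs hιs₀]
    exact φ.num_div_denom.symm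
  have hcross' : derivative r * s₀ + r * derivative s₀
      = derivative r₀ * s + r₀ * derivative s := by
    have := congrArg derivative hcross
    simpa [derivative_mul] using this
  have hkey : (derivative r * s - r * derivative s) * s₀ ^ 2
      = (derivative r₀ * s₀ - r₀ * derivative s₀) * s ^ 2 := by
    linear_combination (-(derivative s * s₀ + derivative s₀ * s)) * hcross
      + (s * s₀) * hcross'
  have hιs2 : ι (s ^ 2) ≠ 0 := RatFunc.algebraMap_ne_zero (pow_ne_zero 2 hs)
  have hιs₀2 : ι (s₀ ^ 2) ≠ 0 := RatFunc.algebraMap_ne_zero (pow_ne_zero 2 hs₀)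
  have hrw : h = ι (derivative r₀ * s₀ - r₀ * derivative s₀) / ι (s₀ ^ 2) := by
    rw [hrs, div_eq_div_iff hιs2 hιs₀2, ← map_mul, ← map_mul, hkey]
  -- sum form
  set Q : Polynomial ℂ := ∏ x ∈ T, (X - C x) with hQ
  set Num : Polynomial ℂ := ∑ x ∈ T, C (d x) * ∏ y ∈ T.erase x, (X - C y) with hNum
  have hQ0 : Q ≠ 0 := by
    apply Finset.prod_ne_zero_iff.2
    intro x _; exact X_sub_C_ne_zero x
  have hιQ : ι Q ≠ 0 := RatFunc.algebraMap_ne_zero hQ0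
  have hsum : (∑ x ∈ T, RatFunc.C (d x) / (RatFunc.X - RatFunc.C x)) = ι Num / ι Q := by
    rw [eq_div_iff hιQ, Finset.sum_mul]
    rw [hNum, map_sum]
    apply Finset.sum_congr rfl
    intro x hx
    have hfac : Q = (X - C x) * ∏ y ∈ T.erase x, (X - C y) := (Finset.mul_prod_erase T _ hx).symm
    have hXC : ι (X - C x) = RatFunc.X - RatFunc.C x := by
      rw [map_sub, RatFunc.algebraMap_X, RatFunc.algebraMap_C]
    have hne : RatFunc.X - RatFunc.C x ≠ 0 := by
      rw [← hXC]; exact RatFunc.algebraMap_ne_zero (X_sub_C_ne_zero x)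
    rw [hfac, map_mul, map_mul, hXC, RatFunc.algebraMap_C]
    field_simp
  have hpoly : (derivative r₀ * s₀ - r₀ * derivative s₀) * Q = s₀ ^ 2 * Num := by
    apply RatFunc.algebraMap_injective ℂ
    rw [map_mul, map_mul]
    have := hrw.symm.trans (heq.trans hsum)
    rw [div_eq_div_iff hιs₀2 hιQ] at this
    linear_combination this
  -- coprimality
  have hco := φ.isCoprime_num_denom
  intro x hx
  have hQe : Q.eval x = 0 := by
    rw [hQ, eval_prod]
    exact Finset.prod_eq_zero hx (by simp)
  by_cases hse : s₀.eval x = 0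
  · exfalso
    have hr₀x : r₀.eval x ≠ 0 := by
      obtain ⟨u, v, huv⟩ := hco
      intro h0
      have := congrArg (eval x) huv
      rw [← hr₀, ← hs₀def, eval_add, eval_mul, eval_mul, h0, hse] at this
      simp at this
    set m := rootMultiplicity x s₀ with hm
    have hmpos : 0 < m := (rootMultiplicity_pos hs₀).2 hse
    obtain ⟨u, hs₀eq, hnd⟩ := s₀.exists_eq_pow_rootMultiplicity_mul_and_not_dvd hs₀ x
    have hux : u.eval x ≠ 0 := fun h0 => hnd (dvd_iff_isRoot.2 h0)
    obtain ⟨k, hk⟩ : ∃ k, m = k + 1 := ⟨m - 1, (Nat.succ_pred_eq_of_pos hmpos).symm⟩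
    rw [← hm, hk] at hs₀eq
    set Q' : Polynomial ℂ := ∏ y ∈ T.erase x, (X - C y) with hQ'
    have hQfac : Q = (X - C x) * Q' := (Finset.mul_prod_erase T _ hx).symm
    have hQ'x : Q'.eval x ≠ 0 := by
      rw [hQ', eval_prod]
      apply Finset.prod_ne_zero_iff.2
      intro y hy
      simp only [eval_sub, eval_X, eval_C, sub_ne_zero]
      exact Ne.symm (Finset.mem_erase.1 hy).1
    set B : Polynomial ℂ := derivative r₀ * (X - C x) * u
      - r₀ * (C ((k : ℂ) + 1) * u + (X - C x) * derivative u) with hB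
    have P2 : (X - C x) ^ (k + 1) * (B * Q')
        = (X - C x) ^ (k + 1) * ((X - C x) ^ (k + 1) * u ^ 2 * Num) := by
      rw [hs₀eq, hQfac] at hpoly
      have hd : derivative ((X - C x) ^ (k + 1) * u)
          = C ((k : ℂ) + 1) * (X - C x) ^ k * u + (X - C x) ^ (k + 1) * derivative u := by
        simp only [derivative_mul, derivative_pow, derivative_X_sub_C, Nat.add_sub_cancel,
          Nat.cast_add, Nat.cast_one, C_add, C_1, mul_one]
        try ring
      rw [hd] at hpoly
      linear_combination hpoly
    have P3 : B * Q' = (X - C x) ^ (k + 1) * u ^ 2 * Num :=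
      mul_left_cancel₀ (pow_ne_zero _ (X_sub_C_ne_zero x)) P2
    have hP3x := congrArg (eval x) P3
    have hBx : B.eval x = -(r₀.eval x * (((k : ℂ) + 1) * u.eval x)) := by
      simp only [hB, eval_sub, eval_mul, eval_add, eval_C, eval_X, sub_self, zero_mul, mul_zero]
      ring
    rw [eval_mul, eval_mul, eval_mul, eval_pow] at hP3x
    simp only [eval_sub, eval_X, eval_C, sub_self] at hP3x
    rw [zero_pow (Nat.succ_ne_zero k)] at hP3x
    simp only [zero_mul] at hP3x
    have hk1 : ((k : ℂ) + 1) ≠ 0 := by exact_mod_cast Nat.succ_ne_zero k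
    rcases mul_eq_zero.1 hP3x with h1 | h1
    · rw [hBx, neg_eq_zero] at h1
      exact (mul_ne_zero hr₀x (mul_ne_zero hk1 hux)) h1
    · exact hQ'x h1
  · have := congrArg (eval x) hpoly
    rw [eval_mul, eval_mul, hQe, mul_zero] at this
    have hNx : Num.eval x = 0 := by
      have h2 : s₀.eval x ^ 2 ≠ 0 := pow_ne_zero 2 hse
      field_simp at this
      rw [eval_pow] at this
      exact (mul_eq_zero.1 this.symm).resolve_left h2
    rw [hNum, eval_finset_sum] at hNx
    rw [Finset.sum_eq_single x] at hNx
    · simp only [eval_mul, eval_C, eval_prod, eval_sub, eval_X] at hNx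
      have : (∏ y ∈ T.erase x, (x - y)) ≠ 0 := by
        apply Finset.prod_ne_zero_iff.2
        intro y hy
        rw [sub_ne_zero]
        exact Ne.symm (Finset.mem_erase.1 hy).1
      exact (mul_eq_zero.1 hNx).resolve_right this
    · intro y hy hyx
      simp only [eval_mul, eval_C, eval_prod, eval_sub, eval_X]
      apply mul_eq_zero_of_right
      exact Finset.prod_eq_zero (Finset.mem_erase.2 ⟨Ne.symm hyx, hx⟩) (by simp)
    · intro hxn; exact absurd hx hxn


lemma isDerivRF_sub {h₁ h₂ : RatFunc ℂ} (H1 : IsDerivRF h₁) (H2 : IsDerivRF h₂) :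
    IsDerivRF (h₁ - h₂) := by
  obtain ⟨r₁, s₁, hs₁, e₁⟩ := H1
  obtain ⟨r₂, s₂, hs₂, e₂⟩ := H2
  refine ⟨r₁ * s₂ - r₂ * s₁, s₁ * s₂, mul_ne_zero hs₁ hs₂, ?_⟩
  set ι := algebraMap (Polynomial ℂ) (RatFunc ℂ)
  have k1 : ι (s₁ ^ 2) ≠ 0 := RatFunc.algebraMap_ne_zero (pow_ne_zero _ hs₁)
  have k2 : ι (s₂ ^ 2) ≠ 0 := RatFunc.algebraMap_ne_zero (pow_ne_zero _ hs₂)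
  have k3 : ι ((s₁ * s₂) ^ 2) ≠ 0 :=
    RatFunc.algebraMap_ne_zero (pow_ne_zero _ (mul_ne_zero hs₁ hs₂))
  rw [e₁, e₂, div_sub_div _ _ k1 k2, div_eq_div_iff (mul_ne_zero k1 k2) k3]
  simp only [← map_mul, ← map_sub]
  apply congrArg ι
  simp only [derivative_sub, derivative_mul]
  ring

lemma sigma_map_poly (σ : RatFunc ℂ ≃ₐ[ℂ] RatFunc ℂ) (α β : ℂ)
    (hσ : σ RatFunc.X = RatFunc.C α * RatFunc.X + RatFunc.C β) (q : Polynomial ℂ) :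
    σ (algebraMap (Polynomial ℂ) (RatFunc ℂ) q)
      = algebraMap (Polynomial ℂ) (RatFunc ℂ) (q.comp (C α * X + C β)) := by
  have key : (σ.toAlgHom.comp (IsScalarTower.toAlgHom ℂ (Polynomial ℂ) (RatFunc ℂ)))
      = (IsScalarTower.toAlgHom ℂ (Polynomial ℂ) (RatFunc ℂ)).comp
          (Polynomial.aeval (C α * X + C β)) := by
    apply Polynomial.algHom_ext
    simp [RatFunc.algebraMap_X, RatFunc.algebraMap_C, hσ]
  have := congrFun (congrArg (fun F => F.toFun) key) q
  simpa [comp_eq_aeval] using this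

lemma comp_ne_zero {s : Polynomial ℂ} (hs : s ≠ 0) (α β : ℂ) (hα : α ≠ 0) :
    s.comp (C α * X + C β) ≠ 0 := by
  intro h0
  apply hs
  apply Polynomial.funext
  intro z
  have h1 : eval ((z - β) * α⁻¹) (s.comp (C α * X + C β)) = 0 := by rw [h0]; simp
  rw [eval_comp] at h1
  have h2 : eval ((z - β) * α⁻¹) (C α * X + C β) = z := by
    simp only [eval_add, eval_mul, eval_C, eval_X]
    field_simp
    ring
  rw [h2] at h1
  simpa using h1

lemma isDerivRF_sigma (σ : RatFunc ℂ ≃ₐ[ℂ] RatFunc ℂ) (α β : ℂ) (hα : α ≠ 0)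
    (hσ : σ RatFunc.X = RatFunc.C α * RatFunc.X + RatFunc.C β) {h : RatFunc ℂ}
    (H : IsDerivRF h) : IsDerivRF (σ h) := by
  obtain ⟨r, s, hs, e⟩ := H
  set w : Polynomial ℂ := C α * X + C β with hw
  refine ⟨C α⁻¹ * (r.comp w), s.comp w, comp_ne_zero hs α β hα, ?_⟩
  have hwd : derivative w = C α := by simp [hw]
  have hdr : derivative (r.comp w) = C α * ((derivative r).comp w) := by
    rw [derivative_comp, hwd]
  have hds : derivative (s.comp w) = C α * ((derivative s).comp w) := by
    rw [derivative_comp, hwd]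
  have hinv : C α⁻¹ * C α = (1 : Polynomial ℂ) := by
    rw [← C_mul, inv_mul_cancel₀ hα, C_1]
  have hN : (derivative r * s - r * derivative s).comp w
      = derivative (C α⁻¹ * (r.comp w)) * (s.comp w)
        - (C α⁻¹ * (r.comp w)) * derivative (s.comp w) := by
    rw [sub_comp, mul_comp, mul_comp, derivative_mul, derivative_C, hdr, hds]
    linear_combination (-((derivative r).comp w * s.comp w
      - r.comp w * (derivative s).comp w)) * hinv
  rw [e, map_div₀, sigma_map_poly σ α β hσ, sigma_map_poly σ α β hσ, hN, pow_comp]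

lemma X_sub_C_ne_zero' (x : ℂ) : RatFunc.X - RatFunc.C x ≠ 0 := by
  have : RatFunc.X - RatFunc.C x
      = algebraMap (Polynomial ℂ) (RatFunc ℂ) (X - C x) := by
    rw [map_sub, RatFunc.algebraMap_X, RatFunc.algebraMap_C]
  rw [this]
  exact RatFunc.algebraMap_ne_zero (X_sub_C_ne_zero x)

lemma RC_ne_zero {x : ℂ} (hx : x ≠ 0) : RatFunc.C x ≠ 0 := by
  rw [← RatFunc.algebraMap_C]
  exact RatFunc.algebraMap_ne_zero (by simpa using hx)

lemma sigma_simple_frac (σ : RatFunc ℂ ≃ₐ[ℂ] RatFunc ℂ) (α β : ℂ) (hα : α ≠ 0)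
    (hσ : σ RatFunc.X = RatFunc.C α * RatFunc.X + RatFunc.C β) (cc aa : ℂ) :
    σ (RatFunc.C cc / (RatFunc.X - RatFunc.C aa))
      = RatFunc.C (cc * α⁻¹) / (RatFunc.X - RatFunc.C ((aa - β) * α⁻¹)) := by
  have hC : ∀ k : ℂ, σ (RatFunc.C k) = RatFunc.C k := fun k => σ.commutes k
  rw [map_div₀, map_sub, hC, hC, hσ]
  have hfac : RatFunc.C α * (RatFunc.X - RatFunc.C ((aa - β) * α⁻¹))
      = RatFunc.C α * RatFunc.X + RatFunc.C β - RatFunc.C aa := by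
    rw [mul_sub, ← map_mul]
    have : α * ((aa - β) * α⁻¹) = aa - β := by field_simp
    rw [this, map_sub]
    ring
  rw [← hfac]
  rw [div_eq_div_iff (mul_ne_zero (RC_ne_zero hα) (X_sub_C_ne_zero' _)) (X_sub_C_ne_zero' _)]
  rw [← mul_assoc, mul_comm (RatFunc.C (cc * α⁻¹)) (RatFunc.C α), ← map_mul]
  have h3 : α * (cc * α⁻¹) = cc := by field_simp
  rw [h3]

/-- Let `f = g + ∑ cᵢ/(z - aᵢ)` with `g` the derivative of a rational
function, the `aᵢ` pairwise distinct and all `cᵢ ≠ 0`, `n ≥ 1`. Then the stabilizer of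
`f` under precomposition by affine transformations `z ↦ az + b` is finite with at most
`n` elements. -/
theorem stabilizer_card_le_number_of_residues
    (n : ℕ) (hn : 1 ≤ n) (a : Fin n → ℂ) (ha : Function.Injective a)
    (c : Fin n → ℂ) (hc : ∀ i, c i ≠ 0)
    (g : RatFunc ℂ)
    (hg : ∃ r s : Polynomial ℂ, s ≠ 0 ∧
      g = algebraMap (Polynomial ℂ) (RatFunc ℂ)
            (Polynomial.derivative r * s - r * Polynomial.derivative s) /
          algebraMap (Polynomial ℂ) (RatFunc ℂ) (s ^ 2))
    (f : RatFunc ℂ)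
    (hf : f = g + ∑ i : Fin n, RatFunc.C (c i) / (RatFunc.X - RatFunc.C (a i))) :
    {p : ℂ × ℂ | p.1 ≠ 0 ∧ ∃ σ : RatFunc ℂ ≃ₐ[ℂ] RatFunc ℂ,
        σ RatFunc.X = RatFunc.C p.1 * RatFunc.X + RatFunc.C p.2 ∧ σ f = f}.Finite ∧
      {p : ℂ × ℂ | p.1 ≠ 0 ∧ ∃ σ : RatFunc ℂ ≃ₐ[ℂ] RatFunc ℂ,
        σ RatFunc.X = RatFunc.C p.1 * RatFunc.X + RatFunc.C p.2 ∧ σ f = f}.ncard ≤ n := by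
  classical
  set S := {p : ℂ × ℂ | p.1 ≠ 0 ∧ ∃ σ : RatFunc ℂ ≃ₐ[ℂ] RatFunc ℂ,
      σ RatFunc.X = RatFunc.C p.1 * RatFunc.X + RatFunc.C p.2 ∧ σ f = f} with hSdef
  set i0 : Fin n := ⟨0, hn⟩ with hi0
  have key : ∀ q : ℂ × ℂ, q ∈ S → ∃ j : Fin n,
      (a j - q.2) * q.1⁻¹ = a i0 ∧ c j * q.1⁻¹ = c i0 := by
    rintro ⟨α, β⟩ ⟨hα, σ, hσX, hσf⟩
    set p : Fin n → ℂ := fun i => (a i - β) * α⁻¹ with hp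
    set e : Fin n → ℂ := fun i => c i * α⁻¹ with he
    have hpinj : Function.Injective p := by
      intro i j hij
      exact ha (sub_left_inj.mp (mul_right_cancel₀ (inv_ne_zero hα) hij))
    have hσsum : σ (∑ i : Fin n, RatFunc.C (c i) / (RatFunc.X - RatFunc.C (a i)))
        = ∑ i : Fin n, RatFunc.C (e i) / (RatFunc.X - RatFunc.C (p i)) := by
      rw [map_sum]
      exact Finset.sum_congr rfl fun i _ => sigma_simple_frac σ α β hα hσX _ _
    have hD : IsDerivRF (σ g - g) := isDerivRF_sub (isDerivRF_sigma σ α β hα hσX hg) hg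
    have hEq : σ g - g = (∑ i : Fin n, RatFunc.C (c i) / (RatFunc.X - RatFunc.C (a i)))
        - ∑ i : Fin n, RatFunc.C (e i) / (RatFunc.X - RatFunc.C (p i)) := by
      have h1 : σ g + σ (∑ i : Fin n, RatFunc.C (c i) / (RatFunc.X - RatFunc.C (a i)))
          = g + ∑ i : Fin n, RatFunc.C (c i) / (RatFunc.X - RatFunc.C (a i)) := by
        rw [← map_add, ← hf, hσf, hf]
      rw [hσsum] at h1
      linear_combination h1
    set T : Finset ℂ := Finset.image a Finset.univ ∪ Finset.image p Finset.univ with hT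
    set d : ℂ → ℂ := fun x => (∑ i : Fin n, if a i = x then c i else 0)
      - (∑ i : Fin n, if p i = x then e i else 0) with hd
    have expand : ∀ (v q : Fin n → ℂ), (∀ i, q i ∈ T) →
        (∑ x ∈ T, RatFunc.C (∑ i : Fin n, if q i = x then v i else 0)
            / (RatFunc.X - RatFunc.C x))
          = ∑ i : Fin n, RatFunc.C (v i) / (RatFunc.X - RatFunc.C (q i)) := by
      intro v q hq
      have step1 : ∀ x ∈ T, RatFunc.C (∑ i : Fin n, if q i = x then v i else 0)
            / (RatFunc.X - RatFunc.C x)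
          = ∑ i : Fin n, if q i = x
              then RatFunc.C (v i) / (RatFunc.X - RatFunc.C x) else 0 := by
        intro x _
        rw [map_sum, Finset.sum_div]
        refine Finset.sum_congr rfl fun i _ => ?_
        split_ifs <;> simp
      rw [Finset.sum_congr rfl step1, Finset.sum_comm]
      refine Finset.sum_congr rfl fun i _ => ?_
      have : ∀ x ∈ T, (if q i = x then RatFunc.C (v i) / (RatFunc.X - RatFunc.C x) else 0)
          = if x = q i then RatFunc.C (v i) / (RatFunc.X - RatFunc.C (q i)) else 0 := by
        intro x _
        by_cases hxi : q i = x
        · rw [if_pos hxi, if_pos hxi.symm, hxi]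
        · rw [if_neg hxi, if_neg (fun h => hxi h.symm)]
      rw [Finset.sum_congr rfl this, Finset.sum_ite_eq' T (q i)
        (fun _ => RatFunc.C (v i) / (RatFunc.X - RatFunc.C (q i))), if_pos (hq i)]
    have haT : ∀ i, a i ∈ T := fun i =>
      Finset.mem_union_left _ (Finset.mem_image_of_mem a (Finset.mem_univ i))
    have hpT : ∀ i, p i ∈ T := fun i =>
      Finset.mem_union_right _ (Finset.mem_image_of_mem p (Finset.mem_univ i))
    have hsum_eq : σ g - g = ∑ x ∈ T, RatFunc.C (d x) / (RatFunc.X - RatFunc.C x) := by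
      rw [hEq, ← expand c a haT, ← expand e p hpT, ← Finset.sum_sub_distrib]
      refine Finset.sum_congr rfl fun x _ => ?_
      rw [hd, map_sub, sub_div]
    have hvan := residues_vanish (σ g - g) hD T d hsum_eq
    have hda := hvan (a i0) (haT i0)
    simp only [hd] at hda
    have h1 : (∑ i : Fin n, if a i = a i0 then c i else 0) = c i0 := by
      rw [Finset.sum_eq_single i0]
      · rw [if_pos rfl]
      · intro i _ hi
        rw [if_neg (fun h => hi (ha h))]
      · intro h; exact absurd (Finset.mem_univ i0) h
    rw [h1, sub_eq_zero] at hda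
    have hex : ∃ j, p j = a i0 := by
      by_contra hno
      push_neg at hno
      have hz : (∑ i : Fin n, if p i = a i0 then e i else 0) = 0 :=
        Finset.sum_eq_zero fun i _ => if_neg (hno i)
      exact hc i0 (hda.trans hz)
    obtain ⟨j, hj⟩ := hex
    have h2 : (∑ i : Fin n, if p i = a i0 then e i else 0) = e j := by
      rw [Finset.sum_eq_single j]
      · rw [if_pos hj]
      · intro i _ hi
        refine if_neg fun h => hi (hpinj (h.trans hj.symm))
      · intro h; exact absurd (Finset.mem_univ j) h
    rw [h2] at hda
    exact ⟨j, hj, hda.symm⟩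
  -- injectivity
  let Φ : {q : ℂ × ℂ // q ∈ S} → Fin n := fun q => Classical.choose (key q.1 q.2)
  have hΦinj : Function.Injective Φ := by
    rintro ⟨q1, hq1⟩ ⟨q2, hq2⟩ hΦ
    obtain ⟨h11, h12⟩ := Classical.choose_spec (key q1 hq1)
    obtain ⟨h21, h22⟩ := Classical.choose_spec (key q2 hq2)
    simp only [Φ] at hΦ
    rw [hΦ] at h11 h12
    have hα1 : q1.1 ≠ 0 := hq1.1
    have hα2 : q2.1 ≠ 0 := hq2.1
    set j := Classical.choose (key q2 hq2)
    have hcj : c j ≠ 0 := by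
      intro h0
      rw [h0, zero_mul] at h22
      exact hc i0 h22.symm
    have hαeq : q1.1 = q2.1 := by
      have := h12.trans h22.symm
      have hinv : q1.1⁻¹ = q2.1⁻¹ := mul_left_cancel₀ hcj this
      exact inv_injective hinv
    have hβeq : q1.2 = q2.2 := by
      rw [hαeq] at h11
      have := h11.trans h21.symm
      have h3 := mul_right_cancel₀ (inv_ne_zero hα2) this
      exact sub_right_inj.mp h3
    exact Subtype.ext (Prod.ext hαeq hβeq)
  have hfin : S.Finite := by
    rw [← Set.finite_coe_iff]
    exact Finite.of_injective Φ hΦinj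
  refine ⟨hfin, ?_⟩
  have h5 : S.ncard = Nat.card {q : ℂ × ℂ // q ∈ S} := (Nat.card_coe_set_eq S).symm
  rw [h5]
  calc Nat.card {q : ℂ × ℂ // q ∈ S} ≤ Nat.card (Fin n) :=
        Nat.card_le_card_of_injective Φ hΦinj
    _ = n := by simp
end
end

section
/- Let n ≥ 2, let a₁, …, aₙ ∈ ℂ be pairwise distinct, let c₁, …, cₙ ∈ ℂ \ {0}, let P ∈ ℂ[z] be a polynomial, and set f = P + Σ_{i=1}^{n} cᵢ/(z − aᵢ) ∈ ℂ(z) (so f has only simple poles and exactly n points with nonzero residue). Assume the stabilizer G = {(a, b) ∈ (ℂ \ {0}) × ℂ : σ_{a,b}(f) = f} has exactly n elements. Then there exist a ∈ ℂ \ {0}, b ∈ ℂ, c ∈ ℂ, a polynomial g ∈ ℂ[z], and a primitive n-th root of unity ξ such that σ_{a,b}(f) = c · Σ_{k=0}^{n−1} ξ^k/(z − ξ^k) + g(zⁿ). -/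
open Polynomial

namespace Stab7

noncomputable section

local notation "RF" => RatFunc ℂ

local notation "am" => algebraMap (Polynomial ℂ) (RatFunc ℂ)

lemma am_inj : Function.Injective am := RatFunc.algebraMap_injective ℂ

lemma am_XC (w : ℂ) : am (Polynomial.X - Polynomial.C w) = RatFunc.X - RatFunc.C w := by
  rw [map_sub, RatFunc.algebraMap_X, RatFunc.algebraMap_C]

lemma XC_ne (w : ℂ) : (RatFunc.X - RatFunc.C w : RF) ≠ 0 := by
  rw [← am_XC]
  intro h
  exact (Polynomial.X_sub_C_ne_zero w) (am_inj (h.trans (map_zero am).symm))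

/-- partial fraction atom -/
def pp (c w : ℂ) : RF := RatFunc.C c / (RatFunc.X - RatFunc.C w)

@[simp] lemma pp_zero (w : ℂ) : pp 0 w = 0 := by simp [pp]

lemma core (U : Finset ℂ) (u : ℂ → ℂ) (Q : Polynomial ℂ)
    (h : ∑ w ∈ U, pp (u w) w = am Q) : ∀ w ∈ U, u w = 0 := by
  intro w₀ hw₀
  have key : am (∑ w ∈ U, Polynomial.C (u w) * ∏ v ∈ U.erase w, (Polynomial.X - Polynomial.C v))
      = am (Q * ∏ v ∈ U, (Polynomial.X - Polynomial.C v)) := by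
    rw [map_sum, map_mul]
    rw [← h, Finset.sum_mul]
    refine Finset.sum_congr rfl fun w hw => ?_
    have factor : am (∏ v ∈ U, (Polynomial.X - Polynomial.C v))
        = (RatFunc.X - RatFunc.C w) * am (∏ v ∈ U.erase w, (Polynomial.X - Polynomial.C v)) := by
      rw [← Finset.mul_prod_erase _ _ hw, map_mul, am_XC]
    rw [map_mul, factor, pp, RatFunc.algebraMap_C]
    field_simp
    rw [mul_div_cancel_right₀ _ (XC_ne w)]
  have hpoly := am_inj key
  have hev := congrArg (Polynomial.eval w₀) hpoly
  simp only [Polynomial.eval_finset_sum, Polynomial.eval_mul, Polynomial.eval_prod,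
    Polynomial.eval_sub, Polynomial.eval_X, Polynomial.eval_C] at hev
  rw [Finset.prod_eq_zero hw₀ (by simp), mul_zero] at hev
  rw [Finset.sum_eq_single w₀ (fun w hw hne => mul_eq_zero_of_right _
      (Finset.prod_eq_zero (Finset.mem_erase.2 ⟨Ne.symm hne, hw₀⟩) (by simp)))
      (fun h' => absurd hw₀ h')] at hev
  have hne : (∏ v ∈ U.erase w₀, (w₀ - v)) ≠ 0 :=
    Finset.prod_ne_zero_iff.2 fun v hv => sub_ne_zero.2 (Ne.symm (Finset.ne_of_mem_erase hv))
  exact (mul_eq_zero.1 hev).resolve_right hne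

lemma unique {S T : Finset ℂ} {r t : ℂ → ℂ} {Q Q' : Polynomial ℂ}
    (hr : ∀ w ∈ S, r w ≠ 0) (ht : ∀ w ∈ T, t w ≠ 0)
    (h : am Q + ∑ w ∈ S, pp (r w) w = am Q' + ∑ w ∈ T, pp (t w) w) :
    S = T ∧ (∀ w ∈ S, r w = t w) ∧ Q = Q' := by
  set u : ℂ → ℂ := fun w => (if w ∈ S then r w else 0) - (if w ∈ T then t w else 0) with hu
  have hsum : ∑ w ∈ S ∪ T, pp (u w) w = am (Q' - Q) := by
    have e1 : ∑ w ∈ S ∪ T, pp (if w ∈ S then r w else 0) w = ∑ w ∈ S, pp (r w) w := by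
      rw [← Finset.sum_subset (Finset.subset_union_left)]
      · exact Finset.sum_congr rfl fun w hw => by rw [if_pos hw]
      · intro w _ hw; rw [if_neg hw, pp_zero]
    have e2 : ∑ w ∈ S ∪ T, pp (if w ∈ T then t w else 0) w = ∑ w ∈ T, pp (t w) w := by
      rw [← Finset.sum_subset (Finset.subset_union_right)]
      · exact Finset.sum_congr rfl fun w hw => by rw [if_pos hw]
      · intro w _ hw; rw [if_neg hw, pp_zero]
    have psub : ∀ (x y : ℂ) (w : ℂ), pp (x - y) w = pp x w - pp y w := by
      intro x y w; rw [pp, pp, pp, map_sub, sub_div]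
    calc ∑ w ∈ S ∪ T, pp (u w) w
        = ∑ w ∈ S ∪ T, (pp (if w ∈ S then r w else 0) w - pp (if w ∈ T then t w else 0) w) :=
          Finset.sum_congr rfl fun w _ => psub _ _ _
      _ = ∑ w ∈ S, pp (r w) w - ∑ w ∈ T, pp (t w) w := by rw [Finset.sum_sub_distrib, e1, e2]
      _ = am (Q' - Q) := by rw [map_sub]; linear_combination h
  have hz := core _ _ _ hsum
  have hST : S = T := by
    apply Finset.ext (fun w => ?_)
    constructor
    · intro hw
      by_contra hwT
      have := hz w (Finset.mem_union_left _ hw)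
      rw [hu] at this
      simp only [if_pos hw, if_neg hwT, sub_zero] at this
      exact hr w hw this
    · intro hw
      by_contra hwS
      have := hz w (Finset.mem_union_right _ hw)
      simp only [hu, if_neg hwS, if_pos hw, zero_sub, neg_eq_zero] at this
      exact ht w hw this
  have hrt : ∀ w ∈ S, r w = t w := by
    intro w hw
    have := hz w (Finset.mem_union_left _ hw)
    simp only [hu, if_pos hw, if_pos (hST ▸ hw), sub_eq_zero] at this
    exact this
  refine ⟨hST, hrt, am_inj ?_⟩
  have : ∑ w ∈ S, pp (r w) w = ∑ w ∈ T, pp (t w) w := by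
    rw [← hST]
    exact Finset.sum_congr rfl fun w hw => by rw [hrt w hw]
  rw [this] at h
  exact add_right_cancel h

lemma am_eq_aeval (Q : Polynomial ℂ) : am Q = Polynomial.aeval (RatFunc.X : RF) Q := by
  have : (IsScalarTower.toAlgHom ℂ (Polynomial ℂ) RF : Polynomial ℂ →ₐ[ℂ] RF)
      = Polynomial.aeval (RatFunc.X : RF) := by
    apply Polynomial.algHom_ext
    simp [RatFunc.algebraMap_X]
  exact congrArg (fun (φ : Polynomial ℂ →ₐ[ℂ] RF) => φ Q) this

lemma aeval_am (p Q : Polynomial ℂ) :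
    Polynomial.aeval (am p) Q = am (Q.comp p) := by
  rw [Polynomial.aeval_algebraMap_apply, Polynomial.comp_eq_aeval]

/-- what σ does to a polynomial part -/
lemma sigma_am (σ : RF ≃ₐ[ℂ] RF) {α β : ℂ}
    (hσ : σ RatFunc.X = RatFunc.C α * RatFunc.X + RatFunc.C β) (Q : Polynomial ℂ) :
    σ (am Q) = am (Q.comp (Polynomial.C α * Polynomial.X + Polynomial.C β)) := by
  rw [am_eq_aeval, ← Polynomial.aeval_algHom_apply, hσ]
  rw [← aeval_am]
  congr 1
  rw [map_add, map_mul, RatFunc.algebraMap_C, RatFunc.algebraMap_X, RatFunc.algebraMap_C]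

lemma C_inj : Function.Injective (RatFunc.C : ℂ →+* RF) := by
  intro x y h
  rw [← RatFunc.algebraMap_C (K := ℂ), ← RatFunc.algebraMap_C (K := ℂ)] at h
  exact Polynomial.C_injective (am_inj h)

lemma C_ne_zero {x : ℂ} (hx : x ≠ 0) : (RatFunc.C x : RF) ≠ 0 := by
  intro h; exact hx (C_inj (by simpa using h))

lemma sigma_pp (σ : RF ≃ₐ[ℂ] RF) {α β : ℂ} (hα : α ≠ 0)
    (hσ : σ RatFunc.X = RatFunc.C α * RatFunc.X + RatFunc.C β) (c w : ℂ) :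
    σ (pp c w) = pp (c / α) ((w - β) / α) := by
  have hC : ∀ x : ℂ, σ (RatFunc.C x) = RatFunc.C x := by
    intro x
    have := σ.commutes x
    rwa [RatFunc.algebraMap_eq_C] at this
  rw [pp, map_div₀, hC, map_sub, hσ, hC]
  have key : RatFunc.C α * RatFunc.X + RatFunc.C β - RatFunc.C w
      = RatFunc.C α * (RatFunc.X - RatFunc.C ((w - β) / α)) := by
    rw [mul_sub, ← map_mul]
    rw [mul_div_cancel₀ _ hα]
    rw [map_sub]
    ring
  rw [key, pp, div_mul_eq_div_div_swap, div_right_comm, ← map_div₀]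

def Represents (f : RF) (S : Finset ℂ) (r : ℂ → ℂ) (Q : Polynomial ℂ) : Prop :=
  (∀ w ∈ S, r w ≠ 0) ∧ f = am Q + ∑ w ∈ S, pp (r w) w

lemma repr_map {f : RF} {S : Finset ℂ} {r : ℂ → ℂ} {Q : Polynomial ℂ}
    (σ : RF ≃ₐ[ℂ] RF) {α β : ℂ} (hα : α ≠ 0)
    (hσ : σ RatFunc.X = RatFunc.C α * RatFunc.X + RatFunc.C β)
    (h : Represents f S r Q) :
    Represents (σ f) (S.image fun w => (w - β) / α) (fun v => r (α * v + β) / α)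
      (Q.comp (Polynomial.C α * Polynomial.X + Polynomial.C β)) := by
  obtain ⟨hr, hf⟩ := h
  constructor
  · intro v hv
    obtain ⟨w, hw, rfl⟩ := Finset.mem_image.1 hv
    have hvw : α * ((w - β) / α) + β = w := by field_simp; ring
    show r (α * ((w - β) / α) + β) / α ≠ 0
    rw [hvw]
    exact div_ne_zero (hr w hw) hα
  · rw [hf, map_add, map_sum, sigma_am σ hσ]
    congr 1
    rw [Finset.sum_image (fun x _ y _ hxy => by field_simp at hxy; exact sub_left_inj.1 hxy)]
    refine Finset.sum_congr rfl fun w hw => ?_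
    rw [sigma_pp σ hα hσ]
    congr 2
    field_simp
    rw [sub_add_cancel]

/-- affine change of variables on polynomials -/
def polyAff (α β : ℂ) (hα : α ≠ 0) : Polynomial ℂ ≃ₐ[ℂ] Polynomial ℂ :=
  AlgEquiv.ofAlgHom
    (Polynomial.aeval (Polynomial.C α * Polynomial.X + Polynomial.C β))
    (Polynomial.aeval (Polynomial.C α⁻¹ * Polynomial.X + Polynomial.C (-(β/α))))
    (by
      apply Polynomial.algHom_ext
      simp only [AlgHom.coe_comp, Function.comp_apply, Polynomial.aeval_X, map_add, map_mul,
        Polynomial.aeval_C, AlgHom.coe_id, id_eq]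
      rw [Polynomial.algebraMap_eq]
      ring_nf
      rw [← Polynomial.C_mul, inv_mul_cancel₀ hα]
      rw [Polynomial.C_1, one_mul, ← Polynomial.C_mul, add_assoc, ← Polynomial.C_add,
        add_neg_cancel, Polynomial.C_0, add_zero])
    (by
      apply Polynomial.algHom_ext
      simp only [AlgHom.coe_comp, Function.comp_apply, Polynomial.aeval_X, map_add, map_mul,
        Polynomial.aeval_C, AlgHom.coe_id, id_eq]
      rw [Polynomial.algebraMap_eq]
      ring_nf
      rw [← Polynomial.C_mul, mul_inv_cancel₀ hα]
      rw [Polynomial.C_1, one_mul, ← Polynomial.C_mul, mul_neg, ← mul_assoc,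
        mul_inv_cancel₀ hα, one_mul, add_assoc, ← Polynomial.C_add, neg_add_cancel,
        Polynomial.C_0, add_zero])

/-- affine change of variables on rational functions -/
def ratAff (α β : ℂ) (hα : α ≠ 0) : RF ≃ₐ[ℂ] RF :=
  AlgEquiv.ofRingEquiv (f := IsFractionRing.ringEquivOfRingEquiv (polyAff α β hα).toRingEquiv)
    (by
      intro c
      rw [IsScalarTower.algebraMap_apply ℂ (Polynomial ℂ) (RatFunc ℂ), Polynomial.algebraMap_eq]
      rw [IsFractionRing.ringEquivOfRingEquiv_algebraMap]
      congr 1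
      show Polynomial.aeval _ (Polynomial.C c) = _
      rw [Polynomial.aeval_C, Polynomial.algebraMap_eq])

lemma ratAff_am (α β : ℂ) (hα : α ≠ 0) (p : Polynomial ℂ) :
    ratAff α β hα (am p) = am (polyAff α β hα p) := by
  show IsFractionRing.ringEquivOfRingEquiv _ (algebraMap _ _ p) = _
  rw [IsFractionRing.ringEquivOfRingEquiv_algebraMap]
  rfl

lemma ratAff_X (α β : ℂ) (hα : α ≠ 0) :
    ratAff α β hα RatFunc.X = RatFunc.C α * RatFunc.X + RatFunc.C β := by
  rw [← RatFunc.algebraMap_X (K := ℂ), ratAff_am]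
  have : polyAff α β hα Polynomial.X = Polynomial.C α * Polynomial.X + Polynomial.C β := by
    show Polynomial.aeval _ Polynomial.X = _
    rw [Polynomial.aeval_X]
  rw [this, map_add, map_mul, RatFunc.algebraMap_C, RatFunc.algebraMap_X, RatFunc.algebraMap_C]

lemma sigma_C (σ : RF ≃ₐ[ℂ] RF) (x : ℂ) : σ (RatFunc.C x) = RatFunc.C x := by
  have := σ.commutes x
  rwa [RatFunc.algebraMap_eq_C] at this

def St (f : RF) : Set (ℂ × ℂ) :=
  {p : ℂ × ℂ | p.1 ≠ 0 ∧ ∃ σ : RF ≃ₐ[ℂ] RF,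
    σ RatFunc.X = RatFunc.C p.1 * RatFunc.X + RatFunc.C p.2 ∧ σ f = f}

lemma st_one (f : RF) : ((1 : ℂ), (0 : ℂ)) ∈ St f := by
  refine ⟨one_ne_zero, AlgEquiv.refl, ?_, rfl⟩
  simp

lemma st_mul {f : RF} {α β α' β' : ℂ} (h : (α, β) ∈ St f) (h' : (α', β') ∈ St f) :
    (α * α', α * β' + β) ∈ St f := by
  obtain ⟨hα, σ, hσX, hσf⟩ := h
  obtain ⟨hα', σ', hσX', hσf'⟩ := h'
  dsimp only at hα hα' hσX hσX'
  refine ⟨mul_ne_zero hα hα', σ.trans σ', ?_, by rw [AlgEquiv.trans_apply, hσf, hσf']⟩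
  show σ' (σ RatFunc.X) = RatFunc.C (α * α') * RatFunc.X + RatFunc.C (α * β' + β)
  rw [hσX, map_add, map_mul, sigma_C, sigma_C, hσX']
  rw [mul_add, ← mul_assoc, ← map_mul, add_assoc, ← map_mul, ← map_add]

lemma aff_inv_formula (α β : ℂ) (hα : α ≠ 0) :
    RatFunc.C α⁻¹ * (RatFunc.C α * RatFunc.X + RatFunc.C β) + RatFunc.C (-(β/α))
      = RatFunc.X := by
  rw [mul_add, ← mul_assoc, ← map_mul, inv_mul_cancel₀ hα, map_one, one_mul,
    ← map_mul, add_assoc, ← map_add]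
  have hx : α⁻¹ * β + -(β/α) = 0 := by field_simp; ring
  rw [hx, map_zero, add_zero]

lemma st_inv {f : RF} {α β : ℂ} (h : (α, β) ∈ St f) : (α⁻¹, -(β/α)) ∈ St f := by
  obtain ⟨hα, σ, hσX, hσf⟩ := h
  refine ⟨inv_ne_zero hα, σ.symm, ?_, ?_⟩
  · rw [AlgEquiv.symm_apply_eq, map_add, map_mul, sigma_C, sigma_C, hσX]
    exact (aff_inv_formula α β hα).symm
  · rw [AlgEquiv.symm_apply_eq, hσf]

lemma exists_primitive {f : RF} {n : ℕ} (hn : 2 ≤ n)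
    (hcard : (St f).ncard = n) (hinj : Set.InjOn Prod.fst (St f)) :
    ∃ ξ β : ℂ, IsPrimitiveRoot ξ n ∧ (ξ, β) ∈ St f := by
  have hnpos : 0 < n := by omega
  have hfin : (St f).Finite := by
    by_contra h
    rw [Set.Infinite.ncard h] at hcard
    omega
  -- the subgroup of ℂˣ of multipliers
  let H : Subgroup ℂˣ :=
    { carrier := {u : ℂˣ | ∃ b, ((u : ℂ), b) ∈ St f}
      one_mem' := ⟨0, by simpa using st_one f⟩
      mul_mem' := by
        rintro u v ⟨b, hb⟩ ⟨b', hb'⟩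
        exact ⟨(u : ℂ) * b' + b, by simpa using st_mul hb hb'⟩
      inv_mem' := by
        rintro u ⟨b, hb⟩
        refine ⟨-(b / (u : ℂ)), ?_⟩
        have := st_inv hb
        simpa [Units.val_inv_eq_inv_val] using this }
  -- identification of images
  have himg : Units.val '' (H : Set ℂˣ) = Prod.fst '' St f := by
    apply Set.eq_of_subset_of_subset
    · rintro x ⟨u, ⟨b, hb⟩, rfl⟩
      exact ⟨((u : ℂ), b), hb, rfl⟩
    · rintro x ⟨⟨α, b⟩, hmem, rfl⟩
      have hα : α ≠ 0 := hmem.1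
      exact ⟨Units.mk0 α hα, ⟨b, hmem⟩, rfl⟩
  have hA : (Prod.fst '' St f).ncard = n := by
    rw [Set.ncard_image_of_injOn hinj, hcard]
  have hHcard : Nat.card H = n := by
    have : Nat.card ↥(H : Set ℂˣ) = n := by
      rw [Nat.card_coe_set_eq]
      rw [← Set.ncard_image_of_injOn ((Units.val_injective : Function.Injective (Units.val : ℂˣ → ℂ)).injOn)]
      rw [himg, hA]
    exact this
  -- every multiplier is an n-th root of unity
  have hpow : ∀ p ∈ St f, p.1 ^ n = 1 := by
    rintro ⟨α, b⟩ hmem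
    have hα : α ≠ 0 := hmem.1
    have hu : (Units.mk0 α hα) ∈ H := ⟨b, hmem⟩
    have : (⟨Units.mk0 α hα, hu⟩ : H) ^ n = 1 := by
      rw [← hHcard]
      exact pow_card_eq_one'
    have h2 : (Units.mk0 α hα) ^ n = 1 := by
      have := congrArg (Subtype.val) this
      simpa using this
    have h3 := congrArg (Units.val) h2
    simpa using h3
  -- the primitive n-th root of unity lies in the image
  obtain ⟨ζ, hζ⟩ : ∃ ζ : ℂ, IsPrimitiveRoot ζ n :=
    ⟨_, Complex.isPrimitiveRoot_exp n (by omega)⟩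
  have hsub : Prod.fst '' St f ⊆ ↑(Polynomial.nthRootsFinset n (1 : ℂ)) := by
    rintro x ⟨p, hp, rfl⟩
    exact (Polynomial.mem_nthRootsFinset hnpos 1).2 (hpow p hp)
  have heq : Prod.fst '' St f = ↑(Polynomial.nthRootsFinset n (1 : ℂ)) := by
    apply Set.eq_of_subset_of_ncard_le hsub ?_ ((Polynomial.nthRootsFinset n (1 : ℂ)).finite_toSet)
    rw [hA, Set.ncard_coe_finset, hζ.card_nthRootsFinset]
  have hζmem : ζ ∈ Prod.fst '' St f := by
    rw [heq]
    exact_mod_cast (Polynomial.mem_nthRootsFinset hnpos 1).2 (hζ.pow_eq_one)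
  obtain ⟨p, hp, hp1⟩ := hζmem
  exact ⟨ζ, p.2, hζ, by rw [← hp1]; exact (by simpa [Prod.ext_iff] using hp : _)⟩

lemma coeff_comp_C_mul_X (R : Polynomial ℂ) (s : ℂ) (m : ℕ) :
    (R.comp (Polynomial.C s * Polynomial.X)).coeff m = s ^ m * R.coeff m := by
  induction R using Polynomial.induction_on' with
  | add p q hp hq =>
    rw [Polynomial.add_comp, Polynomial.coeff_add, hp, hq, Polynomial.coeff_add, mul_add]
  | monomial k a =>
    rw [← Polynomial.C_mul_X_pow_eq_monomial, Polynomial.mul_comp, Polynomial.C_comp,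
      Polynomial.X_pow_comp, mul_pow, ← Polynomial.C_pow, ← mul_assoc, ← Polynomial.C_mul,
      Polynomial.coeff_C_mul, Polynomial.coeff_X_pow, Polynomial.coeff_C_mul,
      Polynomial.coeff_X_pow]
    split_ifs with h
    · subst h; ring
    · ring

lemma exists_expand {R : Polynomial ℂ} {n : ℕ} (hn : 0 < n)
    (hvan : ∀ m, ¬ (n ∣ m) → R.coeff m = 0) :
    ∃ g : Polynomial ℂ, Polynomial.expand ℂ n g = R := by
  refine ⟨∑ k ∈ Finset.range (R.natDegree + 1), Polynomial.C (R.coeff (n * k)) * Polynomial.X ^ k,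
    ?_⟩
  have hg : ∀ k, (∑ k ∈ Finset.range (R.natDegree + 1),
      Polynomial.C (R.coeff (n * k)) * Polynomial.X ^ k).coeff k = R.coeff (n * k) := by
    intro k
    rw [Polynomial.finset_sum_coeff]
    simp only [Polynomial.coeff_C_mul, Polynomial.coeff_X_pow, mul_ite, mul_one, mul_zero]
    rw [Finset.sum_ite_eq (Finset.range (R.natDegree + 1)) k (fun j => R.coeff (n * j))]
    split_ifs with h
    · rfl
    · rw [Finset.mem_range, not_lt] at h
      refine (Polynomial.coeff_eq_zero_of_natDegree_lt ?_).symm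
      calc R.natDegree < k := by omega
        _ ≤ n * k := Nat.le_mul_of_pos_left k hn
  apply Polynomial.ext
  intro m
  rw [Polynomial.coeff_expand hn]
  split_ifs with h
  · rw [hg, Nat.mul_div_cancel' h]
  · exact (hvan m h).symm

theorem main
    (n : ℕ) (hn : 2 ≤ n) (a : Fin n → ℂ) (ha : Function.Injective a)
    (c : Fin n → ℂ) (hc : ∀ i, c i ≠ 0)
    (P : Polynomial ℂ)
    (f : RatFunc ℂ)
    (hf : f = algebraMap (Polynomial ℂ) (RatFunc ℂ) P +
      ∑ i : Fin n, RatFunc.C (c i) / (RatFunc.X - RatFunc.C (a i)))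
    (hstab : (St f).ncard = n) :
    ∃ (a₀ : ℂ) (_ : a₀ ≠ 0) (b₀ c₀ : ℂ) (g : Polynomial ℂ) (ξ : ℂ),
      IsPrimitiveRoot ξ n ∧
      ∃ σ : RatFunc ℂ ≃ₐ[ℂ] RatFunc ℂ,
        σ RatFunc.X = RatFunc.C a₀ * RatFunc.X + RatFunc.C b₀ ∧
        σ f = RatFunc.C c₀ *
            (∑ k ∈ Finset.range n, RatFunc.C (ξ ^ k) / (RatFunc.X - RatFunc.C (ξ ^ k))) +
          Polynomial.aeval ((RatFunc.X : RatFunc ℂ) ^ n) g := by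
  classical
  -- Step 0 : canonical representation of f
  set S₀ : Finset ℂ := Finset.image a Finset.univ with hS₀
  set r₀ : ℂ → ℂ := fun w => ∑ i : Fin n, if a i = w then c i else 0 with hr₀
  have hS₀card : S₀.card = n := by
    rw [hS₀, Finset.card_image_of_injective _ ha, Finset.card_univ, Fintype.card_fin]
  have hr₀a : ∀ i, r₀ (a i) = c i := by
    intro i
    rw [hr₀]
    simp only [ha.eq_iff]
    rw [Finset.sum_ite_eq' Finset.univ i c]
    simp
  have hrepr : Represents f S₀ r₀ P := by
    constructor
    · intro w hw
      obtain ⟨i, _, rfl⟩ := Finset.mem_image.1 hw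
      rw [hr₀a]
      exact hc i
    · rw [hf, hS₀]
      congr 1
      rw [Finset.sum_image (fun i _ j _ hij => ha hij)]
      exact (Finset.sum_congr rfl fun i _ => by rw [hr₀a]; rfl).symm
  -- Step 1 : injectivity of the first projection on the stabilizer
  have hinj : Set.InjOn Prod.fst (St f) := by
    rintro ⟨α, β⟩ hp ⟨α', β'⟩ hq (h1 : α = α')
    subst h1
    obtain ⟨hα, σ, hσX, hσf⟩ := hp
    obtain ⟨_, σ', hσX', hσf'⟩ := hq
    dsimp only at hα hσX hσX'
    set b : ℂ := β' - β with hb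
    have hτ : (σ'.trans σ.symm) RatFunc.X = RatFunc.C 1 * RatFunc.X + RatFunc.C b := by
      rw [AlgEquiv.trans_apply, hσX', map_add, map_mul, sigma_C, sigma_C]
      have hsymmX : σ.symm RatFunc.X = RatFunc.C α⁻¹ * RatFunc.X + RatFunc.C (-(β/α)) := by
        rw [AlgEquiv.symm_apply_eq, map_add, map_mul, sigma_C, sigma_C, hσX]
        exact (aff_inv_formula α β hα).symm
      rw [hsymmX, map_one, one_mul, mul_add, ← mul_assoc, ← map_mul, mul_inv_cancel₀ hα,
        map_one, one_mul, ← map_mul, add_assoc, ← map_add]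
      congr 2
      field_simp [hb]
      ring
    have hτf : (σ'.trans σ.symm) f = f := by
      rw [AlgEquiv.trans_apply, hσf', AlgEquiv.symm_apply_eq, hσf]
    have hrepr' := repr_map (σ'.trans σ.symm) one_ne_zero hτ hrepr
    rw [hτf] at hrepr'
    obtain ⟨hSeq, -, -⟩ := unique hrepr'.1 hrepr.1 (hrepr'.2.symm.trans hrepr.2)
    have hsum : ∑ w ∈ S₀.image (fun w => (w - b) / 1), w = ∑ w ∈ S₀, w := by rw [hSeq]
    rw [Finset.sum_image (fun x _ y _ hxy => by field_simp at hxy; exact sub_left_inj.1 hxy)] at hsum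
    simp only [div_one] at hsum
    rw [Finset.sum_sub_distrib, Finset.sum_const, hS₀card, sub_eq_self] at hsum
    have hn0 : (n : ℂ) ≠ 0 := Nat.cast_ne_zero.2 (by omega)
    rw [nsmul_eq_mul, mul_eq_zero, or_iff_right hn0] at hsum
    have hββ : β' = β := sub_eq_zero.1 hsum
    rw [hββ]
  -- Step 2 : a primitive n-th root of unity in the stabilizer
  obtain ⟨ξ, β, hξ, hξmem⟩ := exists_primitive hn hstab hinj
  have hξ0 : ξ ≠ 0 := fun h => by
    have := hξ.pow_eq_one
    rw [h, zero_pow (by omega : n ≠ 0)] at this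
    exact zero_ne_one this
  have hξ1 : ξ ≠ 1 := by
    intro h
    have := hξ.pow_ne_one_of_pos_of_lt (by omega : 1 ≠ 0) (by omega : 1 < n)
    rw [pow_one, h] at this
    exact this rfl
  have h1ξ : (1 : ℂ) - ξ ≠ 0 := sub_ne_zero.2 (Ne.symm hξ1)
  set p : ℂ := β / (1 - ξ) with hpdef
  have hφp : ξ * p + β = p := by
    rw [hpdef]
    field_simp
    ring
  -- Step 3 : invariance data
  obtain ⟨-, σξ, hσξX0, hσξf⟩ := hξmem
  have hσξX : σξ RatFunc.X = RatFunc.C ξ * RatFunc.X + RatFunc.C β := hσξX0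
  have hreprξ := repr_map σξ hξ0 hσξX hrepr
  rw [hσξf] at hreprξ
  obtain ⟨hSeq, hreq, hQeq⟩ := unique hreprξ.1 hrepr.1 (hreprξ.2.symm.trans hrepr.2)
  -- closure of S₀ under φ : v ↦ ξ v + β
  have hφψ : ∀ w : ℂ, ξ * ((w - β) / ξ) + β = w := fun w => by field_simp; ring
  have hSφ : S₀.image (fun v => ξ * v + β) = S₀ := by
    conv_lhs => rw [← hSeq]
    rw [Finset.image_image]
    rw [show ((fun v => ξ * v + β) ∘ fun w => (w - β) / ξ) = id from funext fun w => hφψ w]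
    exact Finset.image_id
  have hφmem : ∀ v ∈ S₀, ξ * v + β ∈ S₀ := fun v hv => by
    rw [← hSφ]
    exact Finset.mem_image_of_mem _ hv
  -- the residue relation
  have hres : ∀ v ∈ S₀, r₀ (ξ * v + β) = ξ * r₀ v := by
    intro v hv
    have hv' : v ∈ S₀.image (fun w => (w - β) / ξ) := by rw [hSeq]; exact hv
    have := hreq v hv'
    field_simp at this
    linear_combination this
  -- Step 4 : iterates of φ
  set φk : ℕ → ℂ → ℂ := fun k v => ξ ^ k * (v - p) + p with hφk
  have hφk0 : ∀ v, φk 0 v = v := fun v => by rw [hφk]; simp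
  have hφksucc : ∀ k v, φk (k + 1) v = ξ * (φk k v) + β := by
    intro k v
    show ξ ^ (k + 1) * (v - p) + p = ξ * (ξ ^ k * (v - p) + p) + β
    have : ξ * (ξ ^ k * (v - p) + p) + β = ξ ^ (k + 1) * (v - p) + (ξ * p + β) := by ring
    rw [this, hφp]
  have hφkmem : ∀ k, ∀ v ∈ S₀, φk k v ∈ S₀ := by
    intro k
    induction k with
    | zero => intro v hv; rw [hφk0]; exact hv
    | succ k ih => intro v hv; rw [hφksucc]; exact hφmem _ (ih v hv)
  have hφkres : ∀ k, ∀ v ∈ S₀, r₀ (φk k v) = ξ ^ k * r₀ v := by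
    intro k
    induction k with
    | zero => intro v hv; rw [hφk0, pow_zero, one_mul]
    | succ k ih =>
        intro v hv
        rw [hφksucc, hres _ (hφkmem k v hv), ih v hv, pow_succ]
        ring
  -- Step 5 : a base point for the orbit
  obtain ⟨w₀, hw₀S, hw₀p⟩ := Finset.exists_mem_ne (by omega : 1 < S₀.card) p
  set a₀ : ℂ := w₀ - p with ha₀def
  have ha₀ : a₀ ≠ 0 := sub_ne_zero.2 hw₀p
  -- Step 6 : S₀ is the φ-orbit of w₀
  have horb : S₀ = (Finset.range n).image (fun k => φk k w₀) := by
    have hinjk : Set.InjOn (fun k => φk k w₀) (Finset.range n) := by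
      intro i hi j hj hij
      rw [Finset.mem_coe, Finset.mem_range] at hi hj
      have hxx : ξ ^ i * a₀ = ξ ^ j * a₀ := by
        have h' := hij
        dsimp only [φk] at h'
        rw [ha₀def]
        linear_combination h'
      exact hξ.pow_inj hi hj (mul_right_cancel₀ ha₀ hxx)
    refine (Finset.eq_of_subset_of_card_le ?_ ?_).symm
    · intro x hx
      obtain ⟨k, _, rfl⟩ := Finset.mem_image.1 hx
      exact hφkmem k w₀ hw₀S
    · rw [Finset.card_image_of_injOn hinjk, Finset.card_range, hS₀card]
  -- Step 7 : the final change of variables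
  set σ₀ := ratAff a₀ p ha₀ with hσ₀
  have hσ₀X := ratAff_X a₀ p ha₀
  have happly := repr_map σ₀ ha₀ hσ₀X hrepr
  set c₀ : ℂ := r₀ w₀ / a₀ with hc₀
  -- the image of S₀ under ψ₀ is the set of n-th roots of unity
  have himg : S₀.image (fun w => (w - p) / a₀) = (Finset.range n).image (fun k => ξ ^ k) := by
    rw [horb, Finset.image_image]
    refine Finset.image_congr ?_
    intro k _
    show (φk k w₀ - p) / a₀ = ξ ^ k
    dsimp only [φk]
    rw [add_sub_cancel_right, ← ha₀def, mul_div_assoc, div_self ha₀, mul_one]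
  have hsum2 : ∑ w ∈ S₀.image (fun w => (w - p) / a₀),
      pp (r₀ (a₀ * w + p) / a₀) w
      = RatFunc.C c₀ * ∑ k ∈ Finset.range n,
          RatFunc.C (ξ ^ k) / (RatFunc.X - RatFunc.C (ξ ^ k)) := by
    rw [himg]
    rw [Finset.sum_image (fun i hi j hj hij => hξ.pow_inj (Finset.mem_range.1 hi)
      (Finset.mem_range.1 hj) hij)]
    rw [Finset.mul_sum]
    refine Finset.sum_congr rfl fun k hk => ?_
    have hape : a₀ * ξ ^ k + p = φk k w₀ := by
      dsimp only [φk]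
      rw [ha₀def]
      ring
    rw [hape, hφkres k w₀ hw₀S, pp]
    rw [show ξ ^ k * r₀ w₀ / a₀ = c₀ * ξ ^ k by rw [hc₀]; ring]
    rw [map_mul, mul_div_assoc]
  -- the polynomial part
  set R : Polynomial ℂ := P.comp (Polynomial.C a₀ * Polynomial.X + Polynomial.C p) with hR
  have hRinv : R.comp (Polynomial.C ξ * Polynomial.X) = R := by
    rw [hR, Polynomial.comp_assoc]
    conv_rhs => rw [← hQeq]
    rw [Polynomial.comp_assoc]
    congr 1
    simp only [Polynomial.add_comp, Polynomial.mul_comp, Polynomial.C_comp, Polynomial.X_comp]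
    have hβp : Polynomial.C β = Polynomial.C p - Polynomial.C ξ * Polynomial.C p := by
      rw [← Polynomial.C_mul, ← Polynomial.C_sub]
      exact congrArg _ (by linear_combination hφp)
    rw [hβp]
    ring
  have hvan : ∀ m, ¬ (n ∣ m) → R.coeff m = 0 := by
    intro m hm
    have h1 := coeff_comp_C_mul_X R ξ m
    rw [hRinv] at h1
    have h2 : (ξ ^ m - 1) * R.coeff m = 0 := by linear_combination - h1
    rcases mul_eq_zero.1 h2 with h3 | h3
    · exact absurd (hξ.pow_eq_one_iff_dvd m |>.1 (by linear_combination h3)) hm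
    · exact h3
  obtain ⟨g, hg⟩ := exists_expand (by omega : 0 < n) hvan
  -- assemble
  refine ⟨a₀, ha₀, p, c₀, g, ξ, hξ, σ₀, hσ₀X, ?_⟩
  rw [happly.2, hsum2, ← hg, ← Polynomial.expand_aeval, ← am_eq_aeval]
  ring


end

end Stab7

/-- Let `f = P + ∑ cᵢ/(z - aᵢ)` with `P` a polynomial, the `aᵢ` pairwise
distinct, all `cᵢ ≠ 0` and `n ≥ 2`. If the stabilizer of `f` under precomposition by
affine transformations has exactly `n` elements, then after an affine change of
variables `f` has the form `c·∑_{k<n} ξᵏ/(z - ξᵏ) + g(zⁿ)` with `ξ` a primitive `n`-th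
root of unity and `g` a polynomial. -/
theorem stabilizer_maximal_classification
    (n : ℕ) (hn : 2 ≤ n) (a : Fin n → ℂ) (ha : Function.Injective a)
    (c : Fin n → ℂ) (hc : ∀ i, c i ≠ 0)
    (P : Polynomial ℂ)
    (f : RatFunc ℂ)
    (hf : f = algebraMap (Polynomial ℂ) (RatFunc ℂ) P +
      ∑ i : Fin n, RatFunc.C (c i) / (RatFunc.X - RatFunc.C (a i)))
    (hstab : {p : ℂ × ℂ | p.1 ≠ 0 ∧ ∃ σ : RatFunc ℂ ≃ₐ[ℂ] RatFunc ℂ,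
        σ RatFunc.X = RatFunc.C p.1 * RatFunc.X + RatFunc.C p.2 ∧ σ f = f}.ncard = n) :
    ∃ (a₀ : ℂ) (_ : a₀ ≠ 0) (b₀ c₀ : ℂ) (g : Polynomial ℂ) (ξ : ℂ),
      IsPrimitiveRoot ξ n ∧
      ∃ σ : RatFunc ℂ ≃ₐ[ℂ] RatFunc ℂ,
        σ RatFunc.X = RatFunc.C a₀ * RatFunc.X + RatFunc.C b₀ ∧
        σ f = RatFunc.C c₀ *
            (∑ k ∈ Finset.range n, RatFunc.C (ξ ^ k) / (RatFunc.X - RatFunc.C (ξ ^ k))) +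
          Polynomial.aeval ((RatFunc.X : RatFunc ℂ) ^ n) g := by
  exact Stab7.main n hn a ha c hc P f hf hstab
end

section
/- Let L be a differential field of characteristic zero containing ℂ, with derivation δ vanishing on ℂ and field of constants exactly ℂ, i.e. {u ∈ L : δu = 0} = ℂ. Let f, g ∈ ℂ(z), and let x, y ∈ L be transcendental over ℂ and satisfy δ(δx) = δx · f(x), δ(δy) = δy · g(y), with δx ≠ 0 and δy ≠ 0. Assume y is algebraic over the subfield ℂ(x) of L and that δx is transcendental over ℂ(x). Then there exist a ∈ ℂ \ {0} and b ∈ ℂ such that y = a·x + b, and moreover f = σ_{a,b}(g) in ℂ(z), i.e. f(z) = g(az + b) as rational functions. -/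
open Polynomial
set_option synthInstance.maxHeartbeats 400000

section DerAux
variable {L : Type} [Field L]

lemma der_zero (δ : L → L) (hadd : ∀ u v : L, δ (u + v) = δ u + δ v) : δ 0 = 0 := by
  have := hadd 0 0; simp at this; linear_combination this

lemma der_one (δ : L → L) (hmul : ∀ u v : L, δ (u * v) = u * δ v + v * δ u) : δ 1 = 0 := by
  have := hmul 1 1; simp at this; linear_combination this

lemma der_inv (δ : L → L) (hmul : ∀ u v : L, δ (u * v) = u * δ v + v * δ u)
    (u : L) (hu : u ≠ 0) : δ u⁻¹ = -(u⁻¹ * u⁻¹) * δ u := by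
  have h1 : u * u⁻¹ = 1 := mul_inv_cancel₀ hu
  have := hmul u u⁻¹
  rw [h1, der_one δ hmul] at this
  have h2 : u * δ u⁻¹ = -(u⁻¹ * δ u) := by linear_combination -this
  calc δ u⁻¹ = u⁻¹ * (u * δ u⁻¹) := by rw [← mul_assoc, inv_mul_cancel₀ hu, one_mul]
    _ = u⁻¹ * (-(u⁻¹ * δ u)) := by rw [h2]
    _ = -(u⁻¹ * u⁻¹) * δ u := by ring

lemma der_div (δ : L → L) (hmul : ∀ u v : L, δ (u * v) = u * δ v + v * δ u)
    (u v : L) (hv : v ≠ 0) :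
    δ (u / v) = (v * δ u - u * δ v) / (v * v) := by
  rw [div_eq_mul_inv, hmul, der_inv δ hmul v hv]
  field_simp
  ring

variable [Algebra ℂ L]

lemma der_aeval (δ : L → L) (hadd : ∀ u v : L, δ (u + v) = δ u + δ v)
    (hmul : ∀ u v : L, δ (u * v) = u * δ v + v * δ u)
    (hδC : ∀ c : ℂ, δ (algebraMap ℂ L c) = 0) (t : L) (p : ℂ[X]) :
    δ (aeval t p) = aeval t (derivative p) * δ t := by
  induction p using Polynomial.induction_on with
  | C c => simp [hδC]
  | add p q hp hq => simp only [map_add, hadd, hp, hq]; ring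
  | monomial n c ih =>
    have h1 : (C c * X ^ (n + 1) : ℂ[X]) = C c * X ^ n * X := by ring
    rw [h1, map_mul, aeval_X, hmul, ih]
    simp only [derivative_mul, derivative_X, derivative_C, map_add, map_mul, aeval_X, map_one]
    ring
end DerAux

section Tower
set_option maxHeartbeats 1000000
set_option synthInstance.maxHeartbeats 400000
variable {L : Type} [Field L] [Algebra ℂ L]

lemma aevalC_mem (K : IntermediateField ℂ L) (M : IntermediateField (↥K) L)
    (t : L) (ht : t ∈ M) (p : ℂ[X]) : aeval t p ∈ M := by
  induction p using Polynomial.induction_on with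
  | C c =>
    rw [aeval_C]
    exact M.algebraMap_mem (⟨algebraMap ℂ L c, K.algebraMap_mem c⟩ : ↥K)
  | add p q hp hq => rw [map_add]; exact add_mem hp hq
  | monomial n c ih =>
    have h1 : (C c * X ^ (n + 1) : ℂ[X]) = C c * X ^ n * X := by ring
    rw [h1, map_mul, aeval_X]
    exact mul_mem ih ht

lemma der_poly_step (δ : L → L) (hadd : ∀ u v : L, δ (u + v) = δ u + δ v)
    (hmul : ∀ u v : L, δ (u * v) = u * δ v + v * δ u)
    (K : IntermediateField ℂ L) (x : L)
    (hK : ∀ a : L, a ∈ K → ∃ u : L, u ∈ K ∧ δ a = u * δ x)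
    (y : L) (P : Polynomial (↥K)) :
    ∃ u : L, u ∈ IntermediateField.adjoin (↥K) ({y} : Set L) ∧
      δ (Polynomial.aeval y P) = u * δ x +
        Polynomial.aeval y (Polynomial.derivative P) * δ y := by
  set M := IntermediateField.adjoin (↥K) ({y} : Set L) with hM
  have hKM : ∀ a : L, a ∈ K → a ∈ M := by
    intro a ha
    exact M.algebraMap_mem (⟨a, ha⟩ : ↥K)
  have hyM : y ∈ M := IntermediateField.subset_adjoin _ _ rfl
  induction P using Polynomial.induction_on with
  | C a =>
    obtain ⟨u, hu, hdu⟩ := hK (a : L) a.2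
    exact ⟨u, hKM u hu, by simpa using hdu⟩
  | add p q hp hq =>
    obtain ⟨u, hu, hdu⟩ := hp
    obtain ⟨v, hv, hdv⟩ := hq
    refine ⟨u + v, add_mem hu hv, ?_⟩
    rw [map_add, hadd, hdu, hdv, map_add, map_add]
    ring
  | monomial n a ih =>
    obtain ⟨u, hu, hdu⟩ := ih
    refine ⟨y * u, mul_mem hyM hu, ?_⟩
    have h1 : (C a * X ^ (n + 1) : Polynomial (↥K)) = C a * X ^ n * X := by ring
    rw [h1, map_mul, aeval_X, hmul, hdu]
    simp only [derivative_mul, derivative_X, derivative_C, map_add, map_mul, aeval_X, map_one]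
    ring
end Tower

section RatFuncEmbed
variable {A : Type} [Field A] [Algebra ℂ A]

noncomputable def embed (t : A) (ht : Transcendental ℂ t) : RatFunc ℂ →ₐ[ℂ] A :=
  RatFunc.liftAlgHom (Polynomial.aeval t)
    (nonZeroDivisors_le_comap_nonZeroDivisors_of_injective _
      (transcendental_iff_injective.mp ht))

lemma embed_poly (t : A) (ht : Transcendental ℂ t) (p : ℂ[X]) :
    embed t ht (algebraMap ℂ[X] (RatFunc ℂ) p) = aeval t p := by
  have h := RatFunc.liftAlgHom_apply_div' (Polynomial.aeval t)
    (nonZeroDivisors_le_comap_nonZeroDivisors_of_injective _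
      (transcendental_iff_injective.mp ht)) p 1
  simpa [embed] using h

lemma embed_X (t : A) (ht : Transcendental ℂ t) : embed t ht RatFunc.X = t := by
  rw [← RatFunc.algebraMap_X, embed_poly, aeval_X]

lemma embed_C (t : A) (ht : Transcendental ℂ t) (c : ℂ) :
    embed t ht (RatFunc.C c) = algebraMap ℂ A c := by
  rw [← RatFunc.algebraMap_eq_C]
  exact (embed t ht).commutes c

lemma embed_injective (t : A) (ht : Transcendental ℂ t) :
    Function.Injective (embed t ht) :=
  RingHom.injective ((embed t ht) : RatFunc ℂ →+* A)

lemma embed_eval (t : A) (ht : Transcendental ℂ t) (q : RatFunc ℂ) :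
    embed t ht q = RatFunc.eval (algebraMap ℂ A) t q := by
  conv_lhs => rw [← RatFunc.num_div_denom q]
  rw [map_div₀, embed_poly, embed_poly, RatFunc.eval, aeval_def, aeval_def]

lemma ratfunc_algHom_ext (F G : RatFunc ℂ →ₐ[ℂ] A)
    (h : F RatFunc.X = G RatFunc.X) : F = G := by
  have key : F.comp (IsScalarTower.toAlgHom ℂ ℂ[X] (RatFunc ℂ)) =
      G.comp (IsScalarTower.toAlgHom ℂ ℂ[X] (RatFunc ℂ)) := by
    apply Polynomial.algHom_ext
    simpa [RatFunc.algebraMap_X] using h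
  have key' : ∀ p : ℂ[X], F (algebraMap ℂ[X] (RatFunc ℂ) p) =
      G (algebraMap ℂ[X] (RatFunc ℂ) p) := fun p => congrArg (fun φ => φ p) key
  ext q
  conv_lhs => rw [← RatFunc.num_div_denom q]
  conv_rhs => rw [← RatFunc.num_div_denom q]
  rw [map_div₀, map_div₀, key', key']

lemma transcendental_ratfunc_linear (a b : ℂ) (ha : a ≠ 0) :
    Transcendental ℂ (RatFunc.C a * RatFunc.X + RatFunc.C b) := by
  have hX : Transcendental ℂ (RatFunc.X (K := ℂ)) := by
    rw [← RatFunc.algebraMap_X]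
    exact (transcendental_algebraMap_iff (RatFunc.algebraMap_injective ℂ)).2
      (Polynomial.transcendental_X ℂ)
  have h := hX.aeval (C a * X + C b : ℂ[X]) (by rw [natDegree_linear ha]; norm_num)
    (by rw [leadingCoeff_linear ha]; exact mem_nonZeroDivisors_of_ne_zero ha)
  simpa [RatFunc.algebraMap_eq_C] using h
end RatFuncEmbed

lemma exists_sigma (a b : ℂ) (ha : a ≠ 0) :
    ∃ σ : RatFunc ℂ ≃ₐ[ℂ] RatFunc ℂ,
      σ RatFunc.X = RatFunc.C a * RatFunc.X + RatFunc.C b := by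
  have ha' : a⁻¹ ≠ 0 := inv_ne_zero ha
  set u₁ : RatFunc ℂ := RatFunc.C a * RatFunc.X + RatFunc.C b with hu₁
  set u₂ : RatFunc ℂ := RatFunc.C a⁻¹ * RatFunc.X + RatFunc.C (-(a⁻¹ * b)) with hu₂
  have tr₁ := transcendental_ratfunc_linear a b ha
  have tr₂ := transcendental_ratfunc_linear a⁻¹ (-(a⁻¹ * b)) ha'
  set A₁ := embed u₁ tr₁ with hA₁
  set A₂ := embed u₂ tr₂ with hA₂
  have hCmul : RatFunc.C a⁻¹ * RatFunc.C a = 1 := by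
    rw [← map_mul, inv_mul_cancel₀ ha, map_one]
  have hCmul' : RatFunc.C a * RatFunc.C a⁻¹ = 1 := by
    rw [← map_mul, mul_inv_cancel₀ ha, map_one]
  have e12 : A₁ u₂ = RatFunc.X := by
    rw [hu₂, map_add, map_mul, embed_C, embed_C, embed_X]
    rw [show (algebraMap ℂ (RatFunc ℂ)) = RatFunc.C from RatFunc.algebraMap_eq_C] <;> try rfl
    rw [hu₁, map_neg]
    have h2 : RatFunc.C a⁻¹ * RatFunc.C b = RatFunc.C (a⁻¹ * b) := (map_mul _ _ _).symm
    linear_combination RatFunc.X * hCmul + h2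
  have e21 : A₂ u₁ = RatFunc.X := by
    rw [hu₁, map_add, map_mul, embed_C, embed_C, embed_X]
    rw [show (algebraMap ℂ (RatFunc ℂ)) = RatFunc.C from RatFunc.algebraMap_eq_C] <;> try rfl
    rw [hu₂, map_neg]
    have h2 : RatFunc.C a * RatFunc.C (a⁻¹ * b) = RatFunc.C b := by
      rw [← map_mul, ← mul_assoc, mul_inv_cancel₀ ha, one_mul]
    linear_combination RatFunc.X * hCmul' - h2
  refine ⟨AlgEquiv.ofAlgHom A₁ A₂ ?_ ?_, ?_⟩
  · apply ratfunc_algHom_ext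
    rw [AlgHom.comp_apply, hA₂, embed_X]
    simpa using e12
  · apply ratfunc_algHom_ext
    rw [AlgHom.comp_apply, hA₁, embed_X]
    simpa using e21
  · simpa [AlgEquiv.ofAlgHom_apply] using embed_X u₁ tr₁

section MoreAux
variable {L : Type} [Field L]

lemma der_sub (δ : L → L) (hadd : ∀ u v : L, δ (u + v) = δ u + δ v) (u v : L) :
    δ (u - v) = δ u - δ v := by
  have := hadd (u - v) v
  rw [sub_add_cancel] at this
  linear_combination -this

lemma aevalF_mem {F : Type} [Field F] [Algebra F L] (M : IntermediateField F L)
    (t : L) (ht : t ∈ M) (p : F[X]) : aeval t p ∈ M := by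
  induction p using Polynomial.induction_on with
  | C c => rw [aeval_C]; exact M.algebraMap_mem c
  | add p q hp hq => rw [map_add]; exact add_mem hp hq
  | monomial n c ih =>
    have h1 : (C c * X ^ (n + 1) : F[X]) = C c * X ^ n * X := by ring
    rw [h1, map_mul, aeval_X]
    exact mul_mem ih ht
end MoreAux
set_option maxHeartbeats 1000000
set_option synthInstance.maxHeartbeats 400000

/-- If `x, y` are solutions (generic over `ℂ`) of the strongly minimal
Poizat equations `δδx = δx·f(x)`, `δδy = δy·g(y)` in a differential field with
constants exactly `ℂ`, and `y` is algebraic over `ℂ(x)`, then `y = ax + b` for some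
`a ∈ ℂ*`, `b ∈ ℂ`, and `f(z) = g(az + b)`. -/
theorem algebraic_relations_affine
    {L : Type} [Field L] [Algebra ℂ L]
    (δ : L → L)
    (hadd : ∀ u v : L, δ (u + v) = δ u + δ v)
    (hmul : ∀ u v : L, δ (u * v) = u * δ v + v * δ u)
    (hδC : ∀ c : ℂ, δ (algebraMap ℂ L c) = 0)
    (hconst : ∀ u : L, δ u = 0 ↔ ∃ c : ℂ, u = algebraMap ℂ L c)
    (f g : RatFunc ℂ) (x y : L)
    (hxtr : Transcendental ℂ x) (hytr : Transcendental ℂ y)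
    (hx : δ (δ x) = δ x * RatFunc.eval (algebraMap ℂ L) x f)
    (hy : δ (δ y) = δ y * RatFunc.eval (algebraMap ℂ L) y g)
    (hx' : δ x ≠ 0) (hy' : δ y ≠ 0)
    (halg : IsAlgebraic (IntermediateField.adjoin ℂ ({x} : Set L)) y)
    (hdxtr : Transcendental (IntermediateField.adjoin ℂ ({x} : Set L)) (δ x)) :
    ∃ (a b : ℂ), a ≠ 0 ∧ y = algebraMap ℂ L a * x + algebraMap ℂ L b ∧
      ∃ σ : RatFunc ℂ ≃ₐ[ℂ] RatFunc ℂ,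
        σ RatFunc.X = RatFunc.C a * RatFunc.X + RatFunc.C b ∧ f = σ g := by
  classical
  set K := IntermediateField.adjoin ℂ ({x} : Set L) with hKdef
  have hxK : x ∈ K := IntermediateField.subset_adjoin ℂ _ rfl
  have haevalK : ∀ p : ℂ[X], aeval x p ∈ K := fun p => aevalF_mem K x hxK p
  -- derivatives of elements of K
  have hK : ∀ a : L, a ∈ K → ∃ u : L, u ∈ K ∧ δ a = u * δ x := by
    intro a ha
    rw [hKdef, IntermediateField.mem_adjoin_simple_iff] at ha
    obtain ⟨r, s, hrs⟩ := ha
    by_cases hs : aeval x s = 0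
    · refine ⟨0, zero_mem _, ?_⟩
      rw [hrs, hs, div_zero, der_zero δ hadd, zero_mul]
    · refine ⟨(aeval x s * aeval x (derivative r) - aeval x r * aeval x (derivative s)) /
        (aeval x s * aeval x s), div_mem (sub_mem (mul_mem (haevalK s) (haevalK _))
          (mul_mem (haevalK r) (haevalK _))) (mul_mem (haevalK s) (haevalK s)), ?_⟩
      rw [hrs, der_div δ hmul _ _ hs, der_aeval δ hadd hmul hδC x r,
        der_aeval δ hadd hmul hδC x s]
      ring
  haveI hchar : CharZero ↥K := charZero_of_injective_algebraMap (algebraMap ℂ ↥K).injective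
  set M := IntermediateField.adjoin (↥K) ({y} : Set L) with hMdef
  have hyM : y ∈ M := IntermediateField.subset_adjoin _ _ rfl
  have hKM : ∀ a : L, a ∈ K → a ∈ M := fun a ha => M.algebraMap_mem (⟨a, ha⟩ : ↥K)
  have hyint : IsIntegral (↥K) y := halg.isIntegral
  -- delta y = h * delta x
  obtain ⟨u0, hu0M, hu0⟩ := der_poly_step δ hadd hmul K x hK y (minpoly (↥K) y)
  have hmp : aeval y (minpoly (↥K) y) = 0 := minpoly.aeval _ _
  have hder_ne : aeval y (derivative (minpoly (↥K) y)) ≠ 0 := by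
    intro h0
    have hsep : (minpoly (↥K) y).Separable := (minpoly.irreducible hyint).separable
    obtain ⟨A, B, hAB⟩ := hsep
    have := congrArg (aeval y) hAB
    rw [map_add, map_mul, map_mul, hmp, h0, mul_zero, mul_zero, add_zero, map_one] at this
    exact zero_ne_one this
  set h : L := -u0 / aeval y (derivative (minpoly (↥K) y)) with hh
  have hhM : h ∈ M :=
    div_mem (neg_mem hu0M) (aevalF_mem M y hyM _)
  have hdy : δ y = h * δ x := by
    have h1 : (0 : L) = u0 * δ x + aeval y (derivative (minpoly (↥K) y)) * δ y := by
      rw [← hu0, hmp, der_zero δ hadd]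
    rw [hh]
    field_simp
    linear_combination -h1
  -- delta of any element of M
  have hM : ∀ m : L, m ∈ M → ∃ u : L, u ∈ M ∧ δ m = u * δ x := by
    intro m hm
    have h1 := IntermediateField.adjoin_simple_toSubalgebra_of_isAlgebraic hyint.isAlgebraic
    have h2 : m ∈ Algebra.adjoin (↥K) ({y} : Set L) := by
      rw [← h1]; exact hm
    rw [Algebra.adjoin_singleton_eq_range_aeval] at h2
    obtain ⟨Q, hQ⟩ := h2
    subst hQ
    obtain ⟨u, huM, hu⟩ := der_poly_step δ hadd hmul K x hK y Q
    refine ⟨u + aeval y (derivative Q) * h, add_mem huM (mul_mem (aevalF_mem M y hyM _) hhM), ?_⟩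
    show δ (aeval y Q) = (u + aeval y (derivative Q) * h) * δ x
    rw [hu, hdy]
    ring
  have hδxM : δ x ∉ M := by
    intro hmem
    refine hdxtr ?_
    haveI := IntermediateField.isAlgebraic_adjoin_simple hyint
    exact IntermediateField.isAlgebraic_iff.mp
      (Algebra.IsAlgebraic.isAlgebraic (⟨δ x, hmem⟩ : ↥M))
  set F := RatFunc.eval (algebraMap ℂ L) x f with hF
  set G := RatFunc.eval (algebraMap ℂ L) y g with hG
  have hFK : F ∈ K := by
    rw [hF, RatFunc.eval, ← aeval_def, ← aeval_def]
    exact div_mem (haevalK _) (haevalK _)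
  have hFM : F ∈ M := hKM F hFK
  have hGM : G ∈ M := by
    rw [hG, RatFunc.eval, ← aeval_def, ← aeval_def]
    exact div_mem (aevalC_mem K M y hyM _) (aevalC_mem K M y hyM _)
  have hhne : h ≠ 0 := by
    intro h0
    rw [h0, zero_mul] at hdy
    exact hy' hdy
  have hδh : δ h = h * (G - F) := by
    apply mul_left_cancel₀ hx'
    have h1 : δ (δ y) = h * (δ x * F) + δ x * δ h := by
      rw [hdy, hmul, hx]
    have h2 : δ (δ y) = h * δ x * G := by
      rw [hy, hdy]
    linear_combination h1.symm.trans h2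
  obtain ⟨u, huM, hu⟩ := hM h hhM
  have hu0' : u = 0 := by
    by_contra hne
    apply hδxM
    have hdx : δ x = h * (G - F) / u := by
      rw [← hδh, hu]
      field_simp
    rw [hdx]
    exact div_mem (mul_mem hhM (sub_mem hGM hFM)) huM
  have hδh0 : δ h = 0 := by rw [hu, hu0', zero_mul]
  obtain ⟨a, hha⟩ := (hconst h).mp hδh0
  have haz : a ≠ 0 := by
    intro h0
    apply hhne
    rw [hha, h0, map_zero]
  have hGF : G = F := by
    have h1 : h * (G - F) = 0 := by rw [← hδh, hδh0]
    rcases mul_eq_zero.mp h1 with h2 | h2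
    · exact absurd h2 hhne
    · exact sub_eq_zero.mp h2
  have hlin : δ (y - algebraMap ℂ L a * x) = 0 := by
    rw [der_sub δ hadd, hmul, hδC, hdy, hha]
    ring
  obtain ⟨b, hb⟩ := (hconst _).mp hlin
  have hy_ab : y = algebraMap ℂ L a * x + algebraMap ℂ L b := by
    linear_combination hb
  obtain ⟨σ, hσX⟩ := exists_sigma a b haz
  refine ⟨a, b, haz, hy_ab, σ, hσX, ?_⟩
  have hcomp : (embed x hxtr).comp σ.toAlgHom = embed y hytr := by
    apply ratfunc_algHom_ext
    have hstep : ((embed x hxtr).comp σ.toAlgHom) RatFunc.X = embed x hxtr (σ RatFunc.X) := rfl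
    rw [hstep, hσX, map_add, map_mul, embed_C, embed_X, embed_C, embed_X]
    exact hy_ab.symm
  have hfin : embed x hxtr (σ g) = embed x hxtr f := by
    have h1 : embed x hxtr (σ g) = embed y hytr g := by
      rw [← hcomp]; rfl
    rw [h1, embed_eval, embed_eval, ← hG, ← hF, hGF]
  exact ((embed_injective x hxtr) hfin).symm
end

section
/- Let K ⊆ ℂ be a subfield, let p, q ∈ ℂ[z] be nonzero coprime polynomials with all coefficients in K and with at least one of p, q nonconstant, and let c ∈ ℂ be transcendental over K. Then the polynomial p − c·q ∈ ℂ[z] is squarefree, i.e. it has only simple roots. -/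
set_option synthInstance.maxHeartbeats 1000000


/-- If `p, q ∈ ℂ[z]` are nonzero coprime polynomials with coefficients in
a subfield `K ⊆ ℂ`, at least one of them nonconstant, and `c ∈ ℂ` is transcendental
over `K`, then `p - c·q` is squarefree (has only simple roots). -/
theorem generic_translate_squarefree
    (K : Subfield ℂ) (p q : Polynomial ℂ)
    (hp : p ≠ 0) (hq : q ≠ 0) (hcop : IsCoprime p q)
    (hpK : ∀ i, p.coeff i ∈ K) (hqK : ∀ i, q.coeff i ∈ K)
    (hdeg : 1 ≤ p.natDegree ∨ 1 ≤ q.natDegree)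
    (c : ℂ) (hc : Transcendental K c) :
    Squarefree (p - Polynomial.C c * q) := by
  classical
  -- c is not in K
  have hcK : c ∉ K := by
    intro hmem
    exact hc (isAlgebraic_algebraMap (⟨c, hmem⟩ : K))
  -- lift p and q to K[X]
  obtain ⟨P, hP⟩ : ∃ P : Polynomial K, P.map (algebraMap K ℂ) = p :=
    (Polynomial.mem_lifts p).mp <|
      (Polynomial.lifts_iff_coeff_lifts p).mpr fun n => ⟨⟨p.coeff n, hpK n⟩, rfl⟩
  obtain ⟨Q, hQ⟩ : ∃ Q : Polynomial K, Q.map (algebraMap K ℂ) = q :=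
    (Polynomial.mem_lifts q).mp <|
      (Polynomial.lifts_iff_coeff_lifts q).mpr fun n => ⟨⟨q.coeff n, hqK n⟩, rfl⟩
  -- f ≠ 0
  have hf0 : p - Polynomial.C c * q ≠ 0 := by
    intro h0
    have hpq : p = Polynomial.C c * q := by linear_combination h0
    obtain ⟨i, hi⟩ : ∃ i, q.coeff i ≠ 0 := by
      by_contra h
      push_neg at h
      exact hq (Polynomial.ext fun n => by simp [h n])
    have : c = p.coeff i / q.coeff i := by
      rw [hpq, Polynomial.coeff_C_mul]
      field_simp
    exact hcK (this ▸ div_mem (hpK i) (hqK i))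
  -- the Wronskian is nonzero
  have hW : p * Polynomial.derivative q - Polynomial.derivative p * q ≠ 0 := by
    intro h0
    have hEq : p * Polynomial.derivative q = Polynomial.derivative p * q := by
      linear_combination h0
    have hp' : Polynomial.derivative p = 0 := by
      by_contra hne
      have hdvd : p ∣ Polynomial.derivative p :=
        hcop.dvd_of_dvd_mul_right ⟨Polynomial.derivative q, hEq.symm⟩
      have hle := Polynomial.natDegree_le_of_dvd hdvd hne
      rcases Nat.eq_zero_or_pos p.natDegree with h0' | h0'
      · rw [Polynomial.eq_C_of_natDegree_eq_zero h0'] at hne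
        simp at hne
      · have := Polynomial.natDegree_derivative_lt (p := p) (by omega)
        omega
    have hq' : Polynomial.derivative q = 0 := by
      by_contra hne
      have hdvd : q ∣ Polynomial.derivative q := by
        refine hcop.symm.dvd_of_dvd_mul_right ⟨Polynomial.derivative p, ?_⟩
        linear_combination hEq
      have hle := Polynomial.natDegree_le_of_dvd hdvd hne
      rcases Nat.eq_zero_or_pos q.natDegree with h0' | h0'
      · rw [Polynomial.eq_C_of_natDegree_eq_zero h0'] at hne
        simp at hne
      · have := Polynomial.natDegree_derivative_lt (p := q) (by omega)
        omega
    have h1 : p.natDegree = 0 := Polynomial.natDegree_eq_zero_of_derivative_eq_zero hp'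
    have h2 : q.natDegree = 0 := Polynomial.natDegree_eq_zero_of_derivative_eq_zero hq'
    omega
  -- main: f is separable
  have hsep : (p - Polynomial.C c * q).Separable := by
    rw [Polynomial.Separable]
    by_contra hncop
    set f := p - Polynomial.C c * q with hfdef
    have hgu : ¬ IsUnit (EuclideanDomain.gcd f (Polynomial.derivative f)) := by
      intro h; exact hncop (EuclideanDomain.gcd_isUnit_iff.mp h)
    have hg0 : EuclideanDomain.gcd f (Polynomial.derivative f) ≠ 0 := by
      intro h
      exact hf0 (EuclideanDomain.gcd_eq_zero_iff.mp h).1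
    obtain ⟨α, hα⟩ := Complex.isAlgClosed.exists_root
      (EuclideanDomain.gcd f (Polynomial.derivative f))
      (fun hdeg0 => hgu (Polynomial.isUnit_iff_degree_eq_zero.mpr hdeg0))
    have hfα : f.eval α = 0 := hα.dvd (EuclideanDomain.gcd_dvd_left _ _)
    have hf'α : (Polynomial.derivative f).eval α = 0 :=
      hα.dvd (EuclideanDomain.gcd_dvd_right _ _)
    -- translate into conditions on p, q
    have hpα : p.eval α = c * q.eval α := by
      have h := hfα
      simp only [hfdef, Polynomial.eval_sub, Polynomial.eval_mul, Polynomial.eval_C] at h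
      linear_combination h
    have hp'α : (Polynomial.derivative p).eval α = c * (Polynomial.derivative q).eval α := by
      have h := hf'α
      simp only [hfdef, Polynomial.derivative_sub, Polynomial.derivative_C_mul,
        Polynomial.eval_sub, Polynomial.eval_mul, Polynomial.eval_C] at h
      linear_combination h
    -- q(α) ≠ 0
    have hqα : q.eval α ≠ 0 := by
      intro h0
      obtain ⟨u, v, huv⟩ := hcop
      have := congrArg (Polynomial.eval α) huv
      simp [hpα, h0] at this
    -- α is a root of the Wronskian, hence algebraic over K
    have hWα : (p * Polynomial.derivative q - Polynomial.derivative p * q).eval α = 0 := by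
      simp only [Polynomial.eval_sub, Polynomial.eval_mul, hpα, hp'α]
      ring
    set Wk : Polynomial K := P * Polynomial.derivative Q - Polynomial.derivative P * Q with hWk
    have hWkmap : Wk.map (algebraMap K ℂ) =
        p * Polynomial.derivative q - Polynomial.derivative p * q := by
      simp only [hWk, Polynomial.map_sub, Polynomial.map_mul, ← Polynomial.derivative_map, hP, hQ]
    have halg : IsAlgebraic K α := by
      refine ⟨Wk, ?_, ?_⟩
      · intro h0
        exact hW (by rw [← hWkmap, h0, Polynomial.map_zero])
      · rw [Polynomial.aeval_def, Polynomial.eval₂_eq_eval_map, hWkmap]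
        exact hWα
    -- c lies in K(α), which is algebraic over K
    have hint : IsIntegral K α := halg.isIntegral
    haveI := IntermediateField.adjoin.finiteDimensional hint
    have hαmem : α ∈ IntermediateField.adjoin K {α} :=
      IntermediateField.mem_adjoin_simple_self K α
    have hpmem : p.eval α ∈ IntermediateField.adjoin K {α} := by
      rw [← hP, ← Polynomial.eval₂_eq_eval_map, ← Polynomial.aeval_def]
      exact IntermediateField.algebra_adjoin_le_adjoin K {α}
        (Polynomial.aeval_mem_adjoin_singleton K α)
    have hqmem : q.eval α ∈ IntermediateField.adjoin K {α} := by
      rw [← hQ, ← Polynomial.eval₂_eq_eval_map, ← Polynomial.aeval_def]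
      exact IntermediateField.algebra_adjoin_le_adjoin K {α}
        (Polynomial.aeval_mem_adjoin_singleton K α)
    have hcmem : c ∈ IntermediateField.adjoin K {α} := by
      have hceq : c = p.eval α * (q.eval α)⁻¹ := by
        rw [hpα, mul_inv_cancel_right₀ hqα]
      rw [hceq]
      exact mul_mem hpmem (inv_mem hqmem)
    have : IsIntegral K (⟨c, hcmem⟩ : IntermediateField.adjoin K {α}) :=
      IsIntegral.of_finite K _
    have hcint : IsIntegral K c := by
      have h2 : IsIntegral K ((algebraMap (IntermediateField.adjoin K {α}) ℂ)
          ⟨c, hcmem⟩) := this.algebraMap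
      simpa using h2
    exact hc hcint.isAlgebraic
  exact hsep.squarefree
end

section
/- Let K ⊆ ℂ be a subfield, let g ∈ ℂ(z) be a nonconstant rational function that can be written as a quotient of polynomials with coefficients in K, and let c ∈ ℂ be transcendental over K. Then there do not exist c₁ ∈ ℂ and polynomials r, s ∈ ℂ[z] with s ≠ 0 such that 1/(g + c) = c₁ · (r′s − rs′)/s² in ℂ(z); that is, 1/(g + c) cannot be written as a constant multiple of the derivative of a rational function. -/
open Polynomial

/-- Lift a complex polynomial with coefficients in a subfield `K` to a polynomial over `K`. -/
noncomputable def liftToSubfield (K : Subfield ℂ) (p : ℂ[X]) (h : ∀ i, p.coeff i ∈ K) :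
    Polynomial ↥K :=
  ∑ i ∈ p.support, Polynomial.monomial i (⟨p.coeff i, h i⟩ : ↥K)

theorem map_liftToSubfield (K : Subfield ℂ) (p : ℂ[X]) (h : ∀ i, p.coeff i ∈ K) :
    (liftToSubfield K p h).map K.subtype = p := by
  rw [liftToSubfield, Polynomial.map_sum]
  conv_rhs => rw [p.as_sum_support]
  refine Finset.sum_congr rfl fun i _ => ?_
  rw [Polynomial.map_monomial]
  rfl

/-- Key multiplicity lemma: if `r` and `s` are coprime, `s(α) = 0`, then the
root multiplicity of the Wronskian `r' s - r s'` at `α` is exactly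
`rootMultiplicity α s - 1`. -/
theorem wronskian_rootMultiplicity {r s : ℂ[X]} {α : ℂ}
    (hcop : IsCoprime r s) (hs0 : s ≠ 0) (hsα : s.eval α = 0)
    (hD : Polynomial.derivative r * s - r * Polynomial.derivative s ≠ 0) :
    rootMultiplicity α (Polynomial.derivative r * s - r * Polynomial.derivative s)
      = rootMultiplicity α s - 1 := by
  set D := Polynomial.derivative r * s - r * Polynomial.derivative s with hDdef
  set m := rootMultiplicity α s with hm
  have hm1 : 1 ≤ m := (rootMultiplicity_pos hs0).2 hsα
  have hrα : r.eval α ≠ 0 := by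
    intro h0
    obtain ⟨a, b, hab⟩ := hcop
    have := congrArg (Polynomial.eval α) hab
    simp [h0, hsα] at this
  have hs'0 : Polynomial.derivative s ≠ 0 := by
    intro h0
    have := Polynomial.natDegree_eq_zero_of_derivative_eq_zero h0
    have hsC := Polynomial.eq_C_of_natDegree_eq_zero this
    rw [hsC] at hsα
    simp at hsα
    rw [hsC, hsα] at hs0
    simp at hs0
  have hmult_s' : rootMultiplicity α (Polynomial.derivative s) = m - 1 := by
    rw [hm, Polynomial.derivative_rootMultiplicity_of_root hsα]
  have hrs' : r * Polynomial.derivative s ≠ 0 := mul_ne_zero (fun h => hrα (by simp [h])) hs'0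
  have hmult_rs' : rootMultiplicity α (r * Polynomial.derivative s) = m - 1 := by
    rw [rootMultiplicity_mul hrs', rootMultiplicity_eq_zero (by simpa [Polynomial.IsRoot] using hrα),
      hmult_s', zero_add]
  -- lower bound
  have hlow : (X - C α) ^ (m - 1) ∣ D := by
    have h1 : (X - C α) ^ (m - 1) ∣ s := dvd_trans (pow_dvd_pow _ (Nat.sub_le m 1)) (pow_rootMultiplicity_dvd s α)
    have h2 : (X - C α) ^ (m - 1) ∣ Polynomial.derivative s := by
      rw [← hmult_s']; exact pow_rootMultiplicity_dvd _ α
    exact dvd_sub (Dvd.dvd.mul_left h1 _) (Dvd.dvd.mul_left h2 _)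
  -- upper bound
  have hupp : ¬ (X - C α) ^ m ∣ D := by
    intro hdvd
    have h1 : (X - C α) ^ m ∣ Polynomial.derivative r * s :=
      Dvd.dvd.mul_left (pow_rootMultiplicity_dvd s α) _
    have h2 : (X - C α) ^ m ∣ r * Polynomial.derivative s := by
      have : r * Polynomial.derivative s = Polynomial.derivative r * s - D := by ring
      rw [this]; exact dvd_sub h1 hdvd
    have := (Polynomial.le_rootMultiplicity_iff hrs').2 h2
    omega
  have hle : rootMultiplicity α D ≤ m - 1 := by
    by_contra hcon
    push_neg at hcon
    have hmle : m ≤ rootMultiplicity α D := by omega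
    exact hupp (dvd_trans (pow_dvd_pow _ hmle) (pow_rootMultiplicity_dvd D α))
  have hge : m - 1 ≤ rootMultiplicity α D := (Polynomial.le_rootMultiplicity_iff hD).2 hlow
  omega

/-- If `g ∈ ℂ(z)` is a nonconstant rational function defined over a
subfield `K ⊆ ℂ` and `c ∈ ℂ` is transcendental over `K`, then `1/(g + c)` is not a
constant multiple of the derivative of a rational function. -/
theorem generic_reciprocal_not_multiple_of_derivative
    (K : Subfield ℂ) (g : RatFunc ℂ)
    (hgnc : ¬ ∃ c : ℂ, g = RatFunc.C c)
    (hgK : ∃ p q : Polynomial ℂ, q ≠ 0 ∧ (∀ i, p.coeff i ∈ K) ∧ (∀ i, q.coeff i ∈ K) ∧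
      g = algebraMap (Polynomial ℂ) (RatFunc ℂ) p / algebraMap (Polynomial ℂ) (RatFunc ℂ) q)
    (c : ℂ) (hc : Transcendental K c) :
    ¬ ∃ (c₁ : ℂ) (r s : Polynomial ℂ), s ≠ 0 ∧
      1 / (g + RatFunc.C c) = RatFunc.C c₁ *
        (algebraMap (Polynomial ℂ) (RatFunc ℂ)
            (Polynomial.derivative r * s - r * Polynomial.derivative s) /
          algebraMap (Polynomial ℂ) (RatFunc ℂ) (s ^ 2)) := by
  rintro ⟨c₁, r, s, hs, heq⟩
  obtain ⟨p, q, hq, hpK, hqK, hg⟩ := hgK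
  set f : ↥K →+* ℂ := K.subtype with hf
  have hfinj : Function.Injective f := Subtype.val_injective
  set pt := liftToSubfield K p hpK with hpt
  set qt := liftToSubfield K q hqK with hqt
  have hptm : pt.map f = p := map_liftToSubfield K p hpK
  have hqtm : qt.map f = q := map_liftToSubfield K q hqK
  have hqt0 : qt ≠ 0 := by
    intro h0; apply hq; rw [← hqtm, h0, Polynomial.map_zero]
  set dt := GCDMonoid.gcd pt qt with hdt
  have hdt0 : dt ≠ 0 := gcd_ne_zero_of_right hqt0
  set pt1 := pt / dt with hpt1
  set qt1 := qt / dt with hqt1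
  have hcop_t : IsCoprime pt1 qt1 := isCoprime_div_gcd_div_gcd hqt0
  have hptfac : dt * pt1 = pt := EuclideanDomain.mul_div_cancel' hdt0 (gcd_dvd_left pt qt)
  have hqtfac : dt * qt1 = qt := EuclideanDomain.mul_div_cancel' hdt0 (gcd_dvd_right pt qt)
  set p₁ := pt1.map f with hp₁
  set q₁ := qt1.map f with hq₁
  set d := dt.map f with hd
  have hd0 : d ≠ 0 := by
    intro h0; exact hdt0 ((Polynomial.map_eq_zero_iff hfinj).1 h0)
  have hq₁0 : q₁ ≠ 0 := by
    intro h0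
    apply hq
    rw [← hqtm, ← hqtfac, Polynomial.map_mul]
    rw [← hq₁, h0, mul_zero]
  have hcop : IsCoprime p₁ q₁ := hcop_t.map (Polynomial.mapRingHom f)
  have hpfac : p = d * p₁ := by rw [← hptm, ← hptfac, Polynomial.map_mul]
  have hqfac : q = d * q₁ := by rw [← hqtm, ← hqtfac, Polynomial.map_mul]
  set A := algebraMap (Polynomial ℂ) (RatFunc ℂ) with hA
  have hAinj : Function.Injective A := RatFunc.algebraMap_injective ℂ
  have hgrep : g = A p₁ / A q₁ := by
    rw [hg, hpfac, hqfac, map_mul, map_mul,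
      mul_div_mul_left _ _ (RatFunc.algebraMap_ne_zero hd0)]
  set P := p₁ + Polynomial.C c * q₁ with hP
  -- coefficients of p₁, q₁ lie in K
  have hp₁K : ∀ i, p₁.coeff i ∈ K := fun i => by
    rw [hp₁, Polynomial.coeff_map]; exact (pt1.coeff i).2
  have hq₁K : ∀ i, q₁.coeff i ∈ K := fun i => by
    rw [hq₁, Polynomial.coeff_map]; exact (qt1.coeff i).2
  -- c is not in K (else it would be algebraic)
  have hcK : c ∉ K := by
    intro hmem
    exact hc (isAlgebraic_algebraMap (A := ℂ) (⟨c, hmem⟩ : ↥K))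
  -- P has a coefficient ≠ 0 in positive degree
  have hhigh : ∃ n, n ≠ 0 ∧ P.coeff n ≠ 0 := by
    by_contra hcon
    push_neg at hcon
    have hcoeff : ∀ n, n ≠ 0 → p₁.coeff n + c * q₁.coeff n = 0 := by
      intro n hn
      have := hcon n hn
      simpa [hP, Polynomial.coeff_add, Polynomial.coeff_C_mul] using this
    by_cases hex : ∃ n, n ≠ 0 ∧ q₁.coeff n ≠ 0
    · obtain ⟨n, hn, hqn⟩ := hex
      apply hcK
      have hcval : c = -(p₁.coeff n) * (q₁.coeff n)⁻¹ := by
        have := hcoeff n hn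
        field_simp
        linear_combination this
      rw [hcval]
      exact K.mul_mem (K.neg_mem (hp₁K n)) (K.inv_mem (hq₁K n))
    · push_neg at hex
      have hq1c : q₁ = Polynomial.C (q₁.coeff 0) := by
        apply Polynomial.eq_C_of_natDegree_le_zero
        rw [Polynomial.natDegree_le_iff_coeff_eq_zero]
        intro n hn; exact hex n (by omega)
      have hp1c : p₁ = Polynomial.C (p₁.coeff 0) := by
        apply Polynomial.eq_C_of_natDegree_le_zero
        rw [Polynomial.natDegree_le_iff_coeff_eq_zero]
        intro n hn
        have := hcoeff n (by omega)
        rw [hex n (by omega), mul_zero, add_zero] at this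
        exact this
      apply hgnc
      refine ⟨p₁.coeff 0 / q₁.coeff 0, ?_⟩
      rw [hgrep, hq1c, hp1c, RatFunc.algebraMap_C, RatFunc.algebraMap_C, ← map_div₀]
      simp
  obtain ⟨n, hn0, hPn⟩ := hhigh
  have hP0 : P ≠ 0 := fun h0 => hPn (by rw [h0]; simp)
  have hPdeg : 0 < P.degree := by
    calc (0 : WithBot ℕ) < (n : WithBot ℕ) := by exact_mod_cast Nat.pos_of_ne_zero hn0
    _ ≤ P.degree := Polynomial.le_degree_of_ne_zero hPn
  obtain ⟨α, hα⟩ := Complex.exists_root hPdeg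
  have hαe : P.eval α = 0 := hα
  have hPev : p₁.eval α + c * q₁.eval α = 0 := by
    simpa [hP] using hαe
  -- q₁(α) ≠ 0
  have hq₁α : q₁.eval α ≠ 0 := by
    intro h0
    have hp₁α : p₁.eval α = 0 := by rw [h0, mul_zero, add_zero] at hPev; exact hPev
    obtain ⟨a, b, hab⟩ := hcop
    have := congrArg (Polynomial.eval α) hab
    simp [hp₁α, h0] at this
  -- algebraicity machinery
  have hintev : ∀ (β : ℂ), IsAlgebraic ↥K β → ∀ (t : Polynomial ↥K),
      IsIntegral ↥K (Polynomial.eval β (t.map f)) := by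
    intro β hβ t
    have hint : IsIntegral ↥K β := hβ.isIntegral
    have : Polynomial.eval β (t.map f) = Polynomial.aeval β t := by
      rw [Polynomial.aeval_def, ← Polynomial.eval_map]; rfl
    rw [this]
    exact IsIntegral.of_mem_of_fg _ hint.fg_adjoin_singleton _
      (Polynomial.aeval_mem_adjoin_singleton _ _)
  -- α is a simple root of P
  have hP'α : (Polynomial.derivative P).eval α ≠ 0 := by
    intro h0
    set Wt := Polynomial.derivative pt1 * qt1 - pt1 * Polynomial.derivative qt1 with hWt
    set W := Polynomial.derivative p₁ * q₁ - p₁ * Polynomial.derivative q₁ with hW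
    have hWmap : Wt.map f = W := by
      rw [hWt, hW, Polynomial.map_sub, Polynomial.map_mul, Polynomial.map_mul,
        Polynomial.derivative_map, Polynomial.derivative_map]
    have hW0 : W ≠ 0 := by
      intro hWzero
      have hWz : Polynomial.derivative p₁ * q₁ = p₁ * Polynomial.derivative q₁ := by
        have := sub_eq_zero.1 (hW ▸ hWzero)
        exact this
      have hdvd : q₁ ∣ Polynomial.derivative q₁ := by
        refine (hcop.symm).dvd_of_dvd_mul_left ?_
        exact ⟨Polynomial.derivative p₁, by linear_combination -hWz⟩
      have hq₁' : Polynomial.derivative q₁ = 0 := by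
        by_contra hne
        have hlt := Polynomial.degree_derivative_lt hq₁0
        exact hne (Polynomial.eq_zero_of_dvd_of_degree_lt hdvd hlt)
      have hp₁' : Polynomial.derivative p₁ = 0 := by
        have := hWz
        rw [hq₁', mul_zero] at this
        exact (mul_eq_zero.1 this).resolve_right hq₁0
      have hq1c : q₁.natDegree = 0 := Polynomial.natDegree_eq_zero_of_derivative_eq_zero hq₁'
      have hp1c : p₁.natDegree = 0 := Polynomial.natDegree_eq_zero_of_derivative_eq_zero hp₁'
      apply hPn
      rw [hP, Polynomial.coeff_add, Polynomial.coeff_C_mul,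
        Polynomial.coeff_eq_zero_of_natDegree_lt (by omega),
        Polynomial.coeff_eq_zero_of_natDegree_lt (by omega)]
      simp
    have hWt0 : Wt ≠ 0 := by
      intro h0'
      apply hW0
      rw [← hWmap, h0', Polynomial.map_zero]
    have hWα : W.eval α = 0 := by
      have hP' : Polynomial.derivative P = Polynomial.derivative p₁
          + Polynomial.C c * Polynomial.derivative q₁ := by
        rw [hP]; simp [Polynomial.derivative_add, Polynomial.derivative_C_mul]
      have h1 : (Polynomial.derivative p₁).eval α + c * (Polynomial.derivative q₁).eval α = 0 := by
        have := h0
        rw [hP'] at this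
        simpa using this
      rw [hW]
      simp only [Polynomial.eval_sub, Polynomial.eval_mul]
      -- W(α) = q₁(α)·P'(α) − q₁'(α)·P(α)
      linear_combination q₁.eval α * h1 - (Polynomial.derivative q₁).eval α * hPev
    have hαalg : IsAlgebraic ↥K α := by
      refine ⟨Wt, hWt0, ?_⟩
      rw [Polynomial.aeval_def, ← Polynomial.eval_map]
      show Polynomial.eval α (Wt.map f) = 0
      rw [hWmap]; exact hWα
    have hcint : IsIntegral ↥K c := by
      have hcval : c = -(Polynomial.eval α (pt1.map f)) * (Polynomial.eval α (qt1.map f))⁻¹ := by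
        show c = -(p₁.eval α) * (q₁.eval α)⁻¹
        field_simp
        linear_combination hPev
      rw [hcval]
      exact ((hintev α hαalg pt1).neg).mul (hintev α hαalg qt1).inv
    exact hc hcint.isAlgebraic
  have hPmult : rootMultiplicity α P = 1 := by
    have h1 : 1 ≤ rootMultiplicity α P := (rootMultiplicity_pos hP0).2 hα
    have h2 : rootMultiplicity α (Polynomial.derivative P) = rootMultiplicity α P - 1 :=
      Polynomial.derivative_rootMultiplicity_of_root hα
    have h3 : rootMultiplicity α (Polynomial.derivative P) = 0 :=
      rootMultiplicity_eq_zero (by simpa [Polynomial.IsRoot] using hP'α)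
    omega
  -- convert the RatFunc equation to a polynomial identity
  set D := Polynomial.derivative r * s - r * Polynomial.derivative s with hDdef
  have hAq₁ : A q₁ ≠ 0 := RatFunc.algebraMap_ne_zero hq₁0
  have hAP : A P ≠ 0 := RatFunc.algebraMap_ne_zero hP0
  have hAs2 : A (s ^ 2) ≠ 0 := RatFunc.algebraMap_ne_zero (pow_ne_zero 2 hs)
  have hsum : g + RatFunc.C c = A P / A q₁ := by
    rw [hgrep, ← RatFunc.algebraMap_C c, hP, map_add, map_mul, add_div,
      mul_div_assoc, div_self hAq₁, mul_one]
  have h1 : 1 / (g + RatFunc.C c) = A q₁ / A P := by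
    rw [hsum, one_div, inv_div]
  have heq2 : A q₁ / A P = A (Polynomial.C c₁ * D) / A (s ^ 2) := by
    rw [← h1, heq, ← RatFunc.algebraMap_C c₁, ← mul_div_assoc, ← map_mul]
  rw [div_eq_div_iff hAP hAs2] at heq2
  rw [← map_mul, ← map_mul] at heq2
  have hpoly : q₁ * s ^ 2 = Polynomial.C c₁ * D * P := hAinj heq2
  have hlhs0 : q₁ * s ^ 2 ≠ 0 := mul_ne_zero hq₁0 (pow_ne_zero 2 hs)
  have hc₁0 : c₁ ≠ 0 := by
    intro h0; rw [h0] at hpoly; simp at hpoly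
    rcases hpoly with h | h
    exacts [hq₁0 h, hs h]
  have hD0 : D ≠ 0 := by
    intro h0; rw [h0] at hpoly; simp at hpoly
    rcases hpoly with h | h
    exacts [hq₁0 h, hs h]
  have hr0 : r ≠ 0 := by
    intro h0; apply hD0; rw [hDdef, h0]; simp
  -- reduce r/s to lowest terms
  set e := GCDMonoid.gcd r s with he
  have he0 : e ≠ 0 := gcd_ne_zero_of_right hs
  set r₂ := r / e with hr₂
  set s₂ := s / e with hs₂
  have hcop2 : IsCoprime r₂ s₂ := isCoprime_div_gcd_div_gcd hs
  have hrfac : e * r₂ = r := EuclideanDomain.mul_div_cancel' he0 (gcd_dvd_left r s)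
  have hsfac : e * s₂ = s := EuclideanDomain.mul_div_cancel' he0 (gcd_dvd_right r s)
  have hs₂0 : s₂ ≠ 0 := right_div_gcd_ne_zero hs
  set D₂ := Polynomial.derivative r₂ * s₂ - r₂ * Polynomial.derivative s₂ with hD₂def
  have hDfac : D = e ^ 2 * D₂ := by
    rw [hDdef, hD₂def, ← hrfac, ← hsfac]
    simp only [Polynomial.derivative_mul]
    ring
  have hkey : q₁ * s₂ ^ 2 = Polynomial.C c₁ * D₂ * P := by
    have h1 : (q₁ * s₂ ^ 2) * e ^ 2 = (Polynomial.C c₁ * D₂ * P) * e ^ 2 := by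
      have := hpoly
      rw [hDfac, ← hsfac] at this
      linear_combination this
    exact mul_right_cancel₀ (pow_ne_zero 2 he0) h1
  have hD₂0 : D₂ ≠ 0 := by
    intro h0
    apply hD0
    rw [hDfac, h0, mul_zero]
  -- s₂(α) = 0
  have hs₂α : s₂.eval α = 0 := by
    have := congrArg (Polynomial.eval α) hkey
    simp only [Polynomial.eval_mul, Polynomial.eval_pow, Polynomial.eval_C] at this
    rw [hαe, mul_zero] at this
    rcases mul_eq_zero.1 this with h | h
    · exact absurd h hq₁α
    · exact pow_eq_zero_iff (n := 2) (by norm_num) |>.1 h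
  set m := rootMultiplicity α s₂ with hm
  have hm1 : 1 ≤ m := (rootMultiplicity_pos hs₂0).2 hs₂α
  have hmultD₂ : rootMultiplicity α D₂ = m - 1 :=
    wronskian_rootMultiplicity hcop2 hs₂0 hs₂α hD₂0
  -- final multiplicity count
  have hcount := congrArg (rootMultiplicity α) hkey
  have hq₁mult : rootMultiplicity α q₁ = 0 :=
    rootMultiplicity_eq_zero (by simpa [Polynomial.IsRoot] using hq₁α)
  have hCmult : rootMultiplicity α (Polynomial.C c₁) = 0 :=
    rootMultiplicity_eq_zero (by simp [Polynomial.IsRoot, hc₁0])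
  have hlhsm : rootMultiplicity α (q₁ * s₂ ^ 2) = m + m := by
    rw [sq, rootMultiplicity_mul (by rw [← sq]; exact mul_ne_zero hq₁0 (pow_ne_zero 2 hs₂0)),
      rootMultiplicity_mul (mul_ne_zero hs₂0 hs₂0), hq₁mult, zero_add, ← hm]
  have hrhsm : rootMultiplicity α (Polynomial.C c₁ * D₂ * P) = (m - 1) + 1 := by
    rw [rootMultiplicity_mul (mul_ne_zero (mul_ne_zero (by simpa using hc₁0) hD₂0) hP0),
      rootMultiplicity_mul (mul_ne_zero (by simpa using hc₁0) hD₂0),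
      hCmult, hmultD₂, hPmult, zero_add]
  rw [hlhsm, hrhsm] at hcount
  omega
end

section
/- Let L be a differential field of characteristic zero with derivation δ, and let z ∈ L satisfy δ(δz) = z · δz. Then the element c := z² − 2·δz satisfies δc = 0. Moreover, if s ∈ L satisfies s² = z² − 2·δz and δs = 0 and z + s ≠ 0, then the element z₀ := (z − s)/(z + s) satisfies δz₀ = s · z₀ (so that δz₀/z₀ = s whenever z₀ ≠ 0). -/
/-- For a solution `z` of the Poizat equation `δδz = z·δz` in a
differential field of characteristic zero, `c = z² - 2δz` is a constant; and if
`s² = z² - 2δz` with `δs = 0` and `z + s ≠ 0`, then `z₀ = (z - s)/(z + s)` satisfies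
`δz₀ = s·z₀`. -/
theorem poizat_two_step_analysis
    {L : Type*} [Field L] [CharZero L]
    (δ : L → L)
    (hadd : ∀ a b : L, δ (a + b) = δ a + δ b)
    (hmul : ∀ a b : L, δ (a * b) = a * δ b + b * δ a)
    (z : L) (hz : δ (δ z) = z * δ z) :
    δ (z ^ 2 - 2 * δ z) = 0 ∧
    ∀ s : L, s ^ 2 = z ^ 2 - 2 * δ z → δ s = 0 → z + s ≠ 0 →
      δ ((z - s) / (z + s)) = s * ((z - s) / (z + s)) := by
  have h0 : δ 0 = 0 := by
    have := hadd 0 0; simpa using this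
  have hneg : ∀ a : L, δ (-a) = -δ a := by
    intro a
    have h := hadd a (-a)
    rw [add_neg_cancel, h0] at h
    linear_combination -h
  have hsub : ∀ a b : L, δ (a - b) = δ a - δ b := by
    intro a b
    rw [sub_eq_add_neg, hadd, hneg]; ring
  have hsq : δ (z ^ 2) = 2 * z * δ z := by
    have := hmul z z
    rw [show z * z = z ^ 2 by ring] at this
    rw [this]; ring
  have h2 : δ (2 * δ z) = 2 * δ (δ z) := by
    have : (2 : L) * δ z = δ z + δ z := by ring
    rw [this, hadd]; ring
  constructor
  · rw [hsub, hsq, h2, hz]; ring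
  · intro s hs hds hb
    set w : L := (z - s) / (z + s) with hw_def
    have hw : w * (z + s) = z - s := div_mul_cancel₀ _ hb
    have h1 : δ (w * (z + s)) = δ (z - s) := by rw [hw]
    rw [hmul, hadd, hsub, hds] at h1
    -- h1 : w * (δ z + 0) + (z + s) * δ w = δ z - 0
    have hkey : (z + s) * δ w = δ z - w * δ z := by linear_combination h1
    have hdw : δ w = (δ z - w * δ z) / (z + s) := by
      field_simp
      linear_combination hkey
    rw [hdw, hw_def]
    field_simp
    ring_nf
    linear_combination s * hs
end

section
/- Let P ∈ ℂ[z] be a polynomial of degree 3, let K ⊆ ℂ be a subfield containing all coefficients of P, and let c ∈ ℂ be transcendental over K. Then there do not exist e ∈ ℂ and nonzero polynomials r, s ∈ ℂ[z] such that, in ℂ(z), r·s = e·(P + c)·(r′s − rs′); equivalently, 1/(P(z) + c) is not a constant multiple of the logarithmic derivative u′/u of any nonzero rational function u = r/s ∈ ℂ(z). (Hence there is no degree-3 polynomial P such that 1/(P + c) is a constant multiple of a logarithmic derivative for generic values of c.) -/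
open Polynomial

private lemma mul_deriv_aux (β : ℂ) (a : ℕ) (r₁ : ℂ[X]) :
    (X - C β) * derivative ((X - C β) ^ a * r₁) =
      C (a : ℂ) * ((X - C β) ^ a * r₁) + (X - C β) ^ (a + 1) * derivative r₁ := by
  rw [derivative_mul, derivative_pow, derivative_X_sub_C]
  cases a with
  | zero => simp
  | succ n => simp only [Nat.add_sub_cancel, pow_succ]; push_cast; ring

private lemma residue_eq (Q r s : ℂ[X]) (e β : ℂ) (hr : r ≠ 0) (hs : s ≠ 0)
    (hQβ : Q.eval β = 0)
    (hEq : r * s = C e * Q * (derivative r * s - r * derivative s)) :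
    ∃ n : ℤ, n ≠ 0 ∧ e * (derivative Q).eval β * (n : ℂ) = 1 := by
  obtain ⟨r₁, hr₁, hr₁d⟩ := r.exists_eq_pow_rootMultiplicity_mul_and_not_dvd hr β
  obtain ⟨s₁, hs₁, hs₁d⟩ := s.exists_eq_pow_rootMultiplicity_mul_and_not_dvd hs β
  rw [dvd_iff_isRoot] at hr₁d hs₁d
  set a := r.rootMultiplicity β
  set b := s.rootMultiplicity β
  set v : ℂ[X] := X - C β with hv
  obtain ⟨Q₁, hQ₁⟩ : v ∣ Q := dvd_iff_isRoot.mpr hQβ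
  have hvne : v ≠ 0 := X_sub_C_ne_zero β
  have hdr := mul_deriv_aux β a r₁
  have hds := mul_deriv_aux β b s₁
  have key : v ^ (a + b) * (v * (r₁ * s₁)) =
      v ^ (a + b) * (C e * Q * ((C ((a : ℂ) - (b : ℂ))) * (r₁ * s₁)
        + v * (derivative r₁ * s₁ - r₁ * derivative s₁))) := by
    have h2 : v * (derivative r * s - r * derivative s) =
        v ^ (a + b) * ((C ((a : ℂ) - (b : ℂ))) * (r₁ * s₁)
          + v * (derivative r₁ * s₁ - r₁ * derivative s₁)) := by
      calc v * (derivative r * s - r * derivative s)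
          = (v * derivative ((X - C β) ^ a * r₁)) * s
            - r * (v * derivative ((X - C β) ^ b * s₁)) := by
            rw [← hr₁, ← hs₁]; ring
        _ = (C (a : ℂ) * ((X - C β) ^ a * r₁) + (X - C β) ^ (a + 1) * derivative r₁) * s
            - r * (C (b : ℂ) * ((X - C β) ^ b * s₁) + (X - C β) ^ (b + 1) * derivative s₁) := by
            rw [hdr, hds]
        _ = _ := by rw [hr₁, hs₁]; simp only [C_sub, ← hv]; ring
    calc v ^ (a + b) * (v * (r₁ * s₁)) = v * (r * s) := by rw [hr₁, hs₁]; ring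
      _ = C e * Q * (v * (derivative r * s - r * derivative s)) := by rw [hEq]; ring
      _ = _ := by rw [h2]; ring
  have key2 : v * (r₁ * s₁) = v * (C e * Q₁ * ((C ((a : ℂ) - (b : ℂ))) * (r₁ * s₁)
        + v * (derivative r₁ * s₁ - r₁ * derivative s₁))) := by
    have := mul_left_cancel₀ (pow_ne_zero (a + b) hvne) key
    rw [hQ₁] at this
    rw [this]; ring
  have key3 := mul_left_cancel₀ hvne key2
  have hQ'β : (derivative Q).eval β = Q₁.eval β := by
    rw [hQ₁, derivative_mul, hv, derivative_X_sub_C]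
    simp
  have hev := congrArg (Polynomial.eval β) key3
  simp only [eval_mul, eval_add, eval_sub, eval_C, hv, eval_X, sub_self, zero_mul, mul_zero,
    add_zero] at hev
  refine ⟨(a : ℤ) - (b : ℤ), ?_, ?_⟩
  · intro h0
    have hab : (a : ℂ) - (b : ℂ) = 0 := by
      have : ((a : ℤ) : ℂ) - ((b : ℤ) : ℂ) = 0 := by
        exact_mod_cast congrArg (fun t : ℤ => (t : ℂ)) h0
      push_cast at this; exact this
    rw [hab] at hev
    simp at hev
    tauto
  · push_cast
    have hne : r₁.eval β * s₁.eval β ≠ 0 := mul_ne_zero hr₁d hs₁d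
    have : r₁.eval β * s₁.eval β * (1 - e * (derivative Q).eval β * ((a : ℂ) - (b : ℂ))) = 0 := by
      rw [hQ'β]; linear_combination hev
    rcases mul_eq_zero.mp this with h | h
    · exact absurd h hne
    · linear_combination -h

set_option maxHeartbeats 1000000
set_option synthInstance.maxHeartbeats 400000

/-- For `P ∈ ℂ[z]` of degree 3 with coefficients in a subfield `K ⊆ ℂ`
and `c ∈ ℂ` transcendental over `K`, `1/(P + c)` is not a constant multiple of a
logarithmic derivative: there are no `e ∈ ℂ` and nonzero `r, s ∈ ℂ[z]` with
`r·s = e·(P + c)·(r′s - rs′)`. -/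
theorem degree_three_not_log_derivative
    (P : Polynomial ℂ) (hP : P.natDegree = 3)
    (K : Subfield ℂ) (hPK : ∀ i, P.coeff i ∈ K)
    (c : ℂ) (hc : Transcendental K c) :
    ¬ ∃ (e : ℂ) (r s : Polynomial ℂ), r ≠ 0 ∧ s ≠ 0 ∧
      r * s = Polynomial.C e * (P + Polynomial.C c) *
        (Polynomial.derivative r * s - r * Polynomial.derivative s) := by
  rintro ⟨e, r, s, hr, hs, hEq⟩
  set Q : ℂ[X] := P + C c with hQdef
  have hdQ : Q.natDegree = 3 := by
    rw [hQdef, natDegree_add_C, hP]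
  have hQ0 : Q ≠ 0 := fun h => by simp [h] at hdQ
  set l : ℂ := P.coeff 3 with hldef
  have hlc : Q.leadingCoeff = l := by
    rw [Polynomial.leadingCoeff, hdQ, hQdef]
    simp [coeff_C]
    exact hldef.symm
  have hl : l ≠ 0 := by rw [← hlc]; exact leadingCoeff_ne_zero.mpr hQ0
  have hsplit : Q.Splits := IsAlgClosed.splits Q
  have hcard : Q.roots.card = 3 := by rw [splits_iff_card_roots.mp hsplit, hdQ]
  obtain ⟨x, y, z, hxyz⟩ := Multiset.card_eq_three.mp hcard
  have hfac : Q = C l * ((X - C x) * ((X - C y) * (X - C z))) := by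
    have := (C_leadingCoeff_mul_prod_multiset_X_sub_C (splits_iff_card_roots.mp hsplit)).symm
    rw [hxyz, hlc] at this
    simpa using this
  have hx : Q.eval x = 0 := by rw [hfac]; simp
  have hy : Q.eval y = 0 := by rw [hfac]; simp
  have hz : Q.eval z = 0 := by rw [hfac]; simp
  -- derivative values at the roots
  have hdx : (derivative Q).eval x = l * ((x - y) * (x - z)) := by
    rw [hfac]
    simp only [derivative_mul, derivative_C, derivative_X_sub_C, zero_mul, one_mul, mul_one,
      zero_add, eval_mul, eval_add, eval_sub, eval_X, eval_C, sub_self]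
    ring
  have hdy : (derivative Q).eval y = l * ((y - x) * (y - z)) := by
    rw [hfac]
    simp only [derivative_mul, derivative_C, derivative_X_sub_C, zero_mul, one_mul, mul_one,
      zero_add, eval_mul, eval_add, eval_sub, eval_X, eval_C, sub_self]
    ring
  have hdz : (derivative Q).eval z = l * ((z - x) * (z - y)) := by
    rw [hfac]
    simp only [derivative_mul, derivative_C, derivative_X_sub_C, zero_mul, one_mul, mul_one,
      zero_add, eval_mul, eval_add, eval_sub, eval_X, eval_C, sub_self]
    ring
  -- Vieta
  have hexp : Q = C l * X ^ 3 + C (-(l * (x + y + z))) * X ^ 2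
      + C (l * (x * y + y * z + z * x)) * X + C (-(l * (x * y * z))) := by
    rw [hfac]; simp only [C_add, C_mul, C_neg]; ring
  have hcoeff : ∀ j, Q.coeff j = (C l * X ^ 3 + C (-(l * (x + y + z))) * X ^ 2
      + C (l * (x * y + y * z + z * x)) * X + C (-(l * (x * y * z)))).coeff j :=
    fun j => by rw [← hexp]
  have hb : P.coeff 2 = -(l * (x + y + z)) := by
    have h2 := hcoeff 2
    simp only [hQdef, coeff_add, coeff_C_mul, coeff_X_pow, coeff_C, coeff_X] at h2
    norm_num at h2
    linear_combination h2
  have ha : P.coeff 1 = l * (x * y + y * z + z * x) := by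
    have h1 := hcoeff 1
    simp only [hQdef, coeff_add, coeff_C_mul, coeff_X_pow, coeff_C, coeff_X] at h1
    norm_num at h1
    linear_combination h1
  have hd : P.coeff 0 + c = -(l * (x * y * z)) := by
    have h0 := hcoeff 0
    simp only [hQdef, coeff_add, coeff_C_mul, coeff_X_pow, coeff_C, coeff_X] at h0
    norm_num at h0
    linear_combination h0
  -- residue equations
  have hEq' : r * s = C e * Q * (derivative r * s - r * derivative s) := hEq
  obtain ⟨n₁, hn₁, hA⟩ := residue_eq Q r s e x hr hs hx hEq'
  obtain ⟨n₂, hn₂, hB⟩ := residue_eq Q r s e y hr hs hy hEq'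
  obtain ⟨n₃, hn₃, hC⟩ := residue_eq Q r s e z hr hs hz hEq'
  rw [hdx] at hA
  rw [hdy] at hB
  rw [hdz] at hC
  set A1 : ℂ := l * ((x - y) * (x - z)) with hA1
  set B1 : ℂ := l * ((y - x) * (y - z)) with hB1
  set C1 : ℂ := l * ((z - x) * (z - y)) with hC1
  have he : e ≠ 0 := fun h => by simp [h] at hA
  have hA0 : A1 ≠ 0 := fun h => by simp [h] at hA
  have hB0 : B1 ≠ 0 := fun h => by simp [h] at hB
  have hC0 : C1 ≠ 0 := fun h => by simp [h] at hC
  have hn₁c : (n₁ : ℂ) ≠ 0 := Int.cast_ne_zero.mpr hn₁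
  have hn₂c : (n₂ : ℂ) ≠ 0 := Int.cast_ne_zero.mpr hn₂
  have hn₃c : (n₃ : ℂ) ≠ 0 := Int.cast_ne_zero.mpr hn₃
  have hA' : A1 = 1 / (e * n₁) := by field_simp; linear_combination hA
  have hB' : B1 = 1 / (e * n₂) := by field_simp; linear_combination hB
  have hC' : C1 = 1 / (e * n₃) := by field_simp; linear_combination hC
  -- the identity AB + BC + CA = 0 forces n₁ + n₂ + n₃ = 0
  have habc : A1 * B1 + B1 * C1 + C1 * A1 = 0 := by rw [hA1, hB1, hC1]; ring
  have hsum : (n₁ : ℂ) + n₂ + n₃ = 0 := by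
    have h2 : ((n₁ : ℂ) + n₂ + n₃) = e ^ 2 * ((n₁ : ℂ) * n₂ * n₃) * (A1 * B1 + B1 * C1 + C1 * A1) := by
      linear_combination (-(n₃ : ℂ) * (e * B1 * (n₂ : ℂ)) - (n₂ : ℂ)) * hA
        + (-(n₃ : ℂ) - (n₁ : ℂ) * (e * C1 * (n₃ : ℂ))) * hB
        + (-(n₁ : ℂ) - (n₂ : ℂ) * (e * A1 * (n₁ : ℂ))) * hC
    rw [h2, habc, mul_zero]
  have hN₁ : n₁ + n₂ + n₃ = 0 := by exact_mod_cast hsum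
  by_cases hN₂ : n₂ * n₃ + n₁ * n₃ + n₁ * n₂ = 0
  · have h1 : (0 : ℤ) < n₁ ^ 2 := by positivity
    nlinarith [sq_nonneg n₂, sq_nonneg n₃]
  · -- main case: build an algebraic equation for c over K
    have hN₂c : ((n₂ * n₃ + n₁ * n₃ + n₁ * n₂ : ℤ) : ℂ) ≠ 0 := Int.cast_ne_zero.mpr hN₂
    set Lk : K := ⟨P.coeff 3, hPK 3⟩ with hLk
    set Bk : K := ⟨P.coeff 2, hPK 2⟩ with hBk
    set Ak : K := ⟨P.coeff 1, hPK 1⟩ with hAk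
    set Dk : K := ⟨P.coeff 0, hPK 0⟩ with hDk
    have hLk0 : Lk ≠ 0 := fun h => hl (congrArg Subtype.val h)
    set kk : K := (Bk ^ 2 - 3 * Lk * Ak) / Lk with hkk
    have hkkc : (kk : ℂ) = A1 + B1 + C1 := by
      have h1 : ((kk : K) : ℂ) = ((P.coeff 2) ^ 2 - 3 * l * (P.coeff 1)) / l := by
        rw [hkk]; push_cast; rfl
      rw [h1, hb, ha, hA1, hB1, hC1]
      field_simp; ring
    set κ : K := kk ^ 3 * ((n₁ * n₂ * n₃ : ℤ) : K) ^ 2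
        / ((n₂ * n₃ + n₁ * n₃ + n₁ * n₂ : ℤ) : K) ^ 3 with hκ
    have hκc : (κ : ℂ) = (A1 + B1 + C1) ^ 3 * ((n₁ : ℂ) * n₂ * n₃) ^ 2
        / (((n₂ : ℂ) * n₃ + n₁ * n₃ + n₁ * n₂)) ^ 3 := by
      rw [hκ]; push_cast [hkkc]; ring
    have hden : ((n₂ : ℂ) * n₃ + n₁ * n₃ + n₁ * n₂) ≠ 0 := by
      push_cast at hN₂c; exact hN₂c
    have hM : ((n₁ : ℂ) * n₂ * n₃) ≠ 0 := by
      exact mul_ne_zero (mul_ne_zero hn₁c hn₂c) hn₃c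
    have hS : e * ((n₁ : ℂ) * n₂ * n₃) * (A1 + B1 + C1)
        = ((n₂ : ℂ) * n₃ + n₁ * n₃ + n₁ * n₂) := by
      linear_combination ((n₂ : ℂ) * n₃) * hA + ((n₁ : ℂ) * n₃) * hB + ((n₁ : ℂ) * n₂) * hC
    have hprod : e ^ 3 * ((n₁ : ℂ) * n₂ * n₃) * (A1 * B1 * C1) = 1 := by
      linear_combination ((e * B1 * (n₂ : ℂ)) * (e * C1 * (n₃ : ℂ))) * hA
        + (e * C1 * (n₃ : ℂ)) * hB + hC
    have hSval : A1 + B1 + C1 = ((n₂ : ℂ) * n₃ + n₁ * n₃ + n₁ * n₂) / (e * ((n₁ : ℂ) * n₂ * n₃)) := by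
      rw [eq_div_iff (mul_ne_zero he hM)]; linear_combination hS
    have hPval : A1 * B1 * C1 = 1 / (e ^ 3 * ((n₁ : ℂ) * n₂ * n₃)) := by
      rw [eq_div_iff (mul_ne_zero (pow_ne_zero 3 he) hM)]; linear_combination hprod
    have hABCval : A1 * B1 * C1 = (κ : ℂ) := by
      rw [hκc, hSval, hPval]
      rw [div_pow, div_mul_eq_mul_div, div_div, div_eq_div_iff
        (mul_ne_zero (pow_ne_zero 3 he) hM)
        (mul_ne_zero (pow_ne_zero 3 (mul_ne_zero he hM)) (pow_ne_zero 3 hden))]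
      ring
    have hdisc : l * (A1 * B1 * C1) = 27 * l ^ 2 * (P.coeff 0 + c) ^ 2
        + (4 * (P.coeff 2) ^ 3 - 18 * l * (P.coeff 1) * (P.coeff 2)) * (P.coeff 0 + c)
        + 4 * l * (P.coeff 1) ^ 3 - (P.coeff 1) ^ 2 * (P.coeff 2) ^ 2 := by
      rw [hA1, hB1, hC1, hd, hb, ha]; ring
    -- the polynomial over K
    set w : K := 4 * Bk ^ 3 - 18 * Lk * Ak * Bk with hw
    set q : Polynomial K := Polynomial.C (27 * Lk ^ 2) * X ^ 2
        + Polynomial.C (54 * Lk ^ 2 * Dk + w) * X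
        + Polynomial.C (27 * Lk ^ 2 * Dk ^ 2 + w * Dk + 4 * Lk * Ak ^ 3 - Ak ^ 2 * Bk ^ 2
            - Lk * κ) with hq
    have hq0 : q ≠ 0 := by
      intro h
      have h2 := congrArg (fun p : K[X] => p.coeff 2) h
      simp only [hq, coeff_add, coeff_C_mul, coeff_X_pow, coeff_C, coeff_X, coeff_zero] at h2
      norm_num at h2
      exact hLk0 h2
    have haev : (Polynomial.aeval c) q = 0 := by
      have hmap : ∀ k : K, (algebraMap K ℂ) k = (k : ℂ) := fun k => rfl
      rw [hq]
      simp only [map_add, map_mul, map_pow, aeval_C, aeval_X, hmap]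
      rw [hw]
      have h27 : ((27 : K) : ℂ) = 27 := rfl
      have h54 : ((54 : K) : ℂ) = 54 := rfl
      have h4 : ((4 : K) : ℂ) = 4 := rfl
      have h18 : ((18 : K) : ℂ) = 18 := rfl
      have h3 : ((3 : K) : ℂ) = 3 := rfl
      push_cast [h27, h54, h4, h18, h3]
      linear_combination l * hABCval - hdisc
    exact hc ⟨q, hq0, haev⟩
end

section
/- Let a, b ∈ ℂ and P(z) = z³ + a z² + b z ∈ ℂ[z]. Let A₁, A₂, A₃ ∈ ℂ \ {0} with A₁A₂A₃ = 1. Suppose there are infinitely many c ∈ ℂ for which there exist e ∈ ℂ and pairwise distinct α₁, α₂, α₃ ∈ ℂ such that, in ℂ(z), 1/(P(z) + c) = e · (A₁/(z − α₁) + A₂/(z − α₂) + A₃/(z − α₃)). Then A₁ + A₂ + A₃ = 0 and A₁A₂ + A₁A₃ + A₂A₃ = 0; equivalently, {A₁, A₂, A₃} is exactly the set of the three cube roots of unity. -/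
open Polynomial in
lemma quad_param_aux {T : Set ℂ} (hT : T.Infinite) (κ μ : ℂ)
    (h : ∀ t ∈ T, κ * t + μ * t ^ 2 = 0) : μ = 0 := by
  by_contra hμ
  have hp : (C μ * X ^ 2 + C κ * X : ℂ[X]) ≠ 0 := by
    intro h0
    have h2 := congrArg (fun p : ℂ[X] => p.coeff 2) h0
    simp [coeff_X, coeff_X_pow] at h2
    exact hμ h2
  refine hT (Set.Finite.subset (finite_setOf_isRoot hp) ?_)
  intro t ht
  have := h t ht
  simp only [Set.mem_setOf_eq, IsRoot, eval_add, eval_mul, eval_C, eval_pow, eval_X]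
  linear_combination this

lemma key_lemma (a b c e A₁ A₂ A₃ α₁ α₂ α₃ : ℂ)
    (h : 1 / (RatFunc.X ^ 3 + RatFunc.C a * RatFunc.X ^ 2 + RatFunc.C b * RatFunc.X + RatFunc.C c) =
      RatFunc.C e * (RatFunc.C A₁ / (RatFunc.X - RatFunc.C α₁) +
        RatFunc.C A₂ / (RatFunc.X - RatFunc.C α₂) + RatFunc.C A₃ / (RatFunc.X - RatFunc.C α₃))) :
    A₁ + A₂ + A₃ = 0 ∧ A₁ * α₁ + A₂ * α₂ + A₃ * α₃ = 0 ∧ α₁ + α₂ + α₃ = -a ∧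
      α₁ * α₂ + α₁ * α₃ + α₂ * α₃ = b ∧ α₁ * α₂ * α₃ = -c := by
  classical
  set φ := algebraMap (Polynomial ℂ) (RatFunc ℂ) with hφ
  set Q : Polynomial ℂ := Polynomial.X ^ 3 + Polynomial.C a * Polynomial.X ^ 2 +
    Polynomial.C b * Polynomial.X + Polynomial.C c with hQdef
  have hQ0 : Q ≠ 0 := by
    intro h0
    have := congrArg (fun p : Polynomial ℂ => p.coeff 3) h0
    simp [hQdef, Polynomial.coeff_X, Polynomial.coeff_X_pow] at this
  have hD1 : (Polynomial.X - Polynomial.C α₁ : Polynomial ℂ) ≠ 0 := Polynomial.X_sub_C_ne_zero α₁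
  have hD2 : (Polynomial.X - Polynomial.C α₂ : Polynomial ℂ) ≠ 0 := Polynomial.X_sub_C_ne_zero α₂
  have hD3 : (Polynomial.X - Polynomial.C α₃ : Polynomial ℂ) ≠ 0 := Polynomial.X_sub_C_ne_zero α₃
  have hinj : Function.Injective φ := RatFunc.algebraMap_injective ℂ
  have hQ0' : φ Q ≠ 0 := fun h0 => hQ0 (hinj (by simpa using h0))
  have hD1' : φ (Polynomial.X - Polynomial.C α₁) ≠ 0 := fun h0 => hD1 (hinj (by simpa using h0))
  have hD2' : φ (Polynomial.X - Polynomial.C α₂) ≠ 0 := fun h0 => hD2 (hinj (by simpa using h0))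
  have hD3' : φ (Polynomial.X - Polynomial.C α₃) ≠ 0 := fun h0 => hD3 (hinj (by simpa using h0))
  have hh : 1 / φ Q = φ (Polynomial.C e) *
      (φ (Polynomial.C A₁) / φ (Polynomial.X - Polynomial.C α₁) +
       φ (Polynomial.C A₂) / φ (Polynomial.X - Polynomial.C α₂) +
       φ (Polynomial.C A₃) / φ (Polynomial.X - Polynomial.C α₃)) := by
    simpa only [hφ, hQdef, map_add, map_mul, map_sub, map_pow, RatFunc.algebraMap_X,
      RatFunc.algebraMap_C] using h
  set N : Polynomial ℂ :=
    Polynomial.C A₁ * ((Polynomial.X - Polynomial.C α₂) * (Polynomial.X - Polynomial.C α₃)) +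
    Polynomial.C A₂ * ((Polynomial.X - Polynomial.C α₁) * (Polynomial.X - Polynomial.C α₃)) +
    Polynomial.C A₃ * ((Polynomial.X - Polynomial.C α₁) * (Polynomial.X - Polynomial.C α₂)) with hNdef
  have hpoly : (Polynomial.X - Polynomial.C α₁) * (Polynomial.X - Polynomial.C α₂) *
      (Polynomial.X - Polynomial.C α₃) = Polynomial.C e * Q * N := by
    apply hinj
    have hd1 : φ Polynomial.X - φ (Polynomial.C α₁) ≠ 0 := by rw [← map_sub]; exact hD1'
    have hd2 : φ Polynomial.X - φ (Polynomial.C α₂) ≠ 0 := by rw [← map_sub]; exact hD2'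
    have hd3 : φ Polynomial.X - φ (Polynomial.C α₃) ≠ 0 := by rw [← map_sub]; exact hD3'
    simp only [map_mul, map_add, map_sub] at hh
    simp only [hNdef, map_mul, map_add, map_sub]
    field_simp [hd1, hd2, hd3] at hh
    linear_combination hh
  have hL : (Polynomial.X - Polynomial.C α₁) * (Polynomial.X - Polynomial.C α₂) *
      (Polynomial.X - Polynomial.C α₃) =
      Polynomial.X ^ 3 + Polynomial.C (-(α₁ + α₂ + α₃)) * Polynomial.X ^ 2 +
      Polynomial.C (α₁ * α₂ + α₁ * α₃ + α₂ * α₃) * Polynomial.X +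
      Polynomial.C (-(α₁ * α₂ * α₃)) := by
    simp only [map_add, map_mul, map_neg]
    ring
  have hR : Polynomial.C e * Q * N =
      Polynomial.C (e * (A₁ + A₂ + A₃)) * Polynomial.X ^ 5 +
      Polynomial.C (e * (-(A₁ * (α₂ + α₃) + A₂ * (α₁ + α₃) + A₃ * (α₁ + α₂)) +
        a * (A₁ + A₂ + A₃))) * Polynomial.X ^ 4 +
      Polynomial.C (e * ((A₁ * (α₂ * α₃) + A₂ * (α₁ * α₃) + A₃ * (α₁ * α₂)) +
        a * (-(A₁ * (α₂ + α₃) + A₂ * (α₁ + α₃) + A₃ * (α₁ + α₂))) +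
        b * (A₁ + A₂ + A₃))) * Polynomial.X ^ 3 +
      Polynomial.C (e * (a * (A₁ * (α₂ * α₃) + A₂ * (α₁ * α₃) + A₃ * (α₁ * α₂)) +
        b * (-(A₁ * (α₂ + α₃) + A₂ * (α₁ + α₃) + A₃ * (α₁ + α₂))) +
        c * (A₁ + A₂ + A₃))) * Polynomial.X ^ 2 +
      Polynomial.C (e * (b * (A₁ * (α₂ * α₃) + A₂ * (α₁ * α₃) + A₃ * (α₁ * α₂)) +
        c * (-(A₁ * (α₂ + α₃) + A₂ * (α₁ + α₃) + A₃ * (α₁ + α₂))))) * Polynomial.X +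
      Polynomial.C (e * (c * (A₁ * (α₂ * α₃) + A₂ * (α₁ * α₃) + A₃ * (α₁ * α₂)))) := by
    simp only [hQdef, hNdef, map_add, map_mul, map_neg]
    ring
  rw [hL, hR] at hpoly
  have hcoeff : ∀ k : ℕ,
      (Polynomial.X ^ 3 + Polynomial.C (-(α₁ + α₂ + α₃)) * Polynomial.X ^ 2 +
      Polynomial.C (α₁ * α₂ + α₁ * α₃ + α₂ * α₃) * Polynomial.X +
      Polynomial.C (-(α₁ * α₂ * α₃)) : Polynomial ℂ).coeff k =
      (Polynomial.C (e * (A₁ + A₂ + A₃)) * Polynomial.X ^ 5 +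
      Polynomial.C (e * (-(A₁ * (α₂ + α₃) + A₂ * (α₁ + α₃) + A₃ * (α₁ + α₂)) +
        a * (A₁ + A₂ + A₃))) * Polynomial.X ^ 4 +
      Polynomial.C (e * ((A₁ * (α₂ * α₃) + A₂ * (α₁ * α₃) + A₃ * (α₁ * α₂)) +
        a * (-(A₁ * (α₂ + α₃) + A₂ * (α₁ + α₃) + A₃ * (α₁ + α₂))) +
        b * (A₁ + A₂ + A₃))) * Polynomial.X ^ 3 +
      Polynomial.C (e * (a * (A₁ * (α₂ * α₃) + A₂ * (α₁ * α₃) + A₃ * (α₁ * α₂)) +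
        b * (-(A₁ * (α₂ + α₃) + A₂ * (α₁ + α₃) + A₃ * (α₁ + α₂))) +
        c * (A₁ + A₂ + A₃))) * Polynomial.X ^ 2 +
      Polynomial.C (e * (b * (A₁ * (α₂ * α₃) + A₂ * (α₁ * α₃) + A₃ * (α₁ * α₂)) +
        c * (-(A₁ * (α₂ + α₃) + A₂ * (α₁ + α₃) + A₃ * (α₁ + α₂))))) * Polynomial.X +
      Polynomial.C (e * (c * (A₁ * (α₂ * α₃) + A₂ * (α₁ * α₃) + A₃ * (α₁ * α₂)))) :
        Polynomial ℂ).coeff k := fun k => by rw [hpoly]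
  have h5 := hcoeff 5
  have h4 := hcoeff 4
  have h3 := hcoeff 3
  have h2 := hcoeff 2
  have h1 := hcoeff 1
  have h0 := hcoeff 0
  simp only [Polynomial.coeff_add, Polynomial.coeff_C_mul, Polynomial.coeff_X_pow,
    Polynomial.coeff_C, Polynomial.coeff_X] at h5 h4 h3 h2 h1 h0
  norm_num at h5 h4 h3 h2 h1 h0
  have he : e ≠ 0 := by
    intro h0e
    rw [h0e] at h3
    simp at h3
  have hs : A₁ + A₂ + A₃ = 0 := h5.resolve_left he
  have h4' := h4.resolve_left he
  have hM : -(A₁ * (α₂ + α₃) + A₂ * (α₁ + α₃) + A₃ * (α₁ + α₂)) = 0 := by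
    linear_combination h4' - a * hs
  have hem0 : e * (A₁ * (α₂ * α₃) + A₂ * (α₁ * α₃) + A₃ * (α₁ * α₂)) = 1 := by
    linear_combination -h3 - e * a * hM - e * b * hs
  refine ⟨hs, ?_, ?_, ?_, ?_⟩
  · linear_combination hM + (α₁ + α₂ + α₃) * hs
  · linear_combination -h2 - a * hem0 - e * b * hM - e * c * hs
  · linear_combination h1 + b * hem0 + c * e * hM
  · linear_combination -h0 - c * hem0

open RatFunc in
/-- Let `P(z) = z³ + az² + bz` and `A₁, A₂, A₃ ∈ ℂ*` with `A₁A₂A₃ = 1`.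
If for infinitely many `c ∈ ℂ` one can write
`1/(P(z)+c) = e·(A₁/(z-α₁) + A₂/(z-α₂) + A₃/(z-α₃))` with the `αᵢ` pairwise distinct,
then `A₁ + A₂ + A₃ = 0` and `A₁A₂ + A₁A₃ + A₂A₃ = 0`, i.e. `{A₁, A₂, A₃}` is the set of
cube roots of unity. -/
theorem residue_ratios_cube_roots
    (a b : ℂ) (A₁ A₂ A₃ : ℂ) (hA₁ : A₁ ≠ 0) (hA₂ : A₂ ≠ 0) (hA₃ : A₃ ≠ 0)
    (hprod : A₁ * A₂ * A₃ = 1)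
    (hinf : {c : ℂ | ∃ (e : ℂ) (α₁ α₂ α₃ : ℂ), α₁ ≠ α₂ ∧ α₁ ≠ α₃ ∧ α₂ ≠ α₃ ∧
      1 / (X ^ 3 + C a * X ^ 2 + C b * X + C c) =
        C e * (C A₁ / (X - C α₁) + C A₂ / (X - C α₂) + C A₃ / (X - C α₃))}.Infinite) :
    A₁ + A₂ + A₃ = 0 ∧ A₁ * A₂ + A₁ * A₃ + A₂ * A₃ = 0 := by
  classical
  set S := {c : ℂ | ∃ (e : ℂ) (α₁ α₂ α₃ : ℂ), α₁ ≠ α₂ ∧ α₁ ≠ α₃ ∧ α₂ ≠ α₃ ∧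
      1 / (X ^ 3 + C a * X ^ 2 + C b * X + C c) =
        C e * (C A₁ / (X - C α₁) + C A₂ / (X - C α₂) + C A₃ / (X - C α₃))} with hSdef
  have hS : ∀ c ∈ S, ∃ (e : ℂ) (α₁ α₂ α₃ : ℂ), α₁ ≠ α₂ ∧ α₁ ≠ α₃ ∧ α₂ ≠ α₃ ∧
      1 / (X ^ 3 + C a * X ^ 2 + C b * X + C c) =
        C e * (C A₁ / (X - C α₁) + C A₂ / (X - C α₂) + C A₃ / (X - C α₃)) := fun c hc => hc
  choose! ef f₁ f₂ f₃ hP using hS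
  have hfact : ∀ c ∈ S, A₁ + A₂ + A₃ = 0 ∧
      A₁ * f₁ c + A₂ * f₂ c + A₃ * f₃ c = 0 ∧ f₁ c + f₂ c + f₃ c = -a ∧
      f₁ c * f₂ c + f₁ c * f₃ c + f₂ c * f₃ c = b ∧ f₁ c * f₂ c * f₃ c = -c :=
    fun c hc => key_lemma a b c (ef c) A₁ A₂ A₃ (f₁ c) (f₂ c) (f₃ c) (hP c hc).2.2.2
  obtain ⟨c₀, hc₀⟩ := hinf.nonempty
  obtain ⟨hs₁, hβA, hβ1, hβ2, hβ3⟩ := hfact c₀ hc₀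
  refine ⟨hs₁, ?_⟩
  -- the difference of any two witness triples satisfies the homogeneous system
  have hdiff : ∀ c ∈ S, (A₁ - A₃) * (f₁ c - f₁ c₀) = (A₃ - A₂) * (f₂ c - f₂ c₀) := by
    intro c hc
    obtain ⟨-, hA, h1, -, -⟩ := hfact c hc
    linear_combination hA - hβA - A₃ * (h1 - hβ1)
  by_cases h13 : A₁ = A₃
  · -- then A₁ ≠ A₂ and the parameter is t = f₁ c - f₁ c₀, with f₂ c = f₂ c₀
    exfalso
    have h12 : A₃ - A₂ ≠ 0 := by
      intro h
      apply hA₁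
      linear_combination (1 / 3) * hs₁ + (2 / 3) * h13 + (1 / 3) * h
    have hd2 : ∀ c ∈ S, f₂ c = f₂ c₀ := by
      intro c hc
      have := hdiff c hc
      rw [h13] at this
      simp only [sub_self, zero_mul] at this
      have h' := (mul_eq_zero.mp this.symm).resolve_left h12
      linear_combination h'
    have hd3 : ∀ c ∈ S, f₃ c = f₃ c₀ - (f₁ c - f₁ c₀) := by
      intro c hc
      obtain ⟨-, -, h1, -, -⟩ := hfact c hc
      have h2 := hd2 c hc
      linear_combination h1 - hβ1 - h2
    have hquad : ∀ t ∈ (fun c => f₁ c - f₁ c₀) '' S,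
        (f₃ c₀ - f₁ c₀) * t + (-1) * t ^ 2 = 0 := by
      rintro t ⟨c, hc, rfl⟩
      obtain ⟨-, -, -, hE, -⟩ := hfact c hc
      have h2 := hd2 c hc
      have h3 := hd3 c hc
      linear_combination hE - hβ2 - (f₁ c + f₃ c₀ - (f₁ c - f₁ c₀)) * h2
        - (f₁ c + f₂ c) * h3
    have hinj : Set.InjOn (fun c => f₁ c - f₁ c₀) S := by
      intro c hc c' hc' hcc
      simp only at hcc
      have e1 : f₁ c = f₁ c' := by linear_combination hcc
      have e2 : f₂ c = f₂ c' := by rw [hd2 c hc, hd2 c' hc']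
      have e3 : f₃ c = f₃ c' := by rw [hd3 c hc, hd3 c' hc', hcc]
      obtain ⟨-, -, -, -, hp⟩ := hfact c hc
      obtain ⟨-, -, -, -, hp'⟩ := hfact c' hc'
      rw [e1, e2, e3] at hp
      linear_combination hp - hp'
    have hT : ((fun c => f₁ c - f₁ c₀) '' S).Infinite := Set.Infinite.image hinj hinf
    have := quad_param_aux hT _ _ hquad
    norm_num at this
  · -- A₁ ≠ A₃; parameter is t = f₂ c - f₂ c₀
    have h13' : A₁ - A₃ ≠ 0 := sub_ne_zero.mpr h13
    set lam := (A₃ - A₂) / (A₁ - A₃) with hlam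
    have hd1 : ∀ c ∈ S, f₁ c = f₁ c₀ + lam * (f₂ c - f₂ c₀) := by
      intro c hc
      have := hdiff c hc
      have hk : lam * (A₁ - A₃) = A₃ - A₂ := by rw [hlam]; exact div_mul_cancel₀ _ h13'
      apply mul_left_cancel₀ h13'
      linear_combination this - (f₂ c - f₂ c₀) * hk
    have hd3 : ∀ c ∈ S, f₃ c = f₃ c₀ - (1 + lam) * (f₂ c - f₂ c₀) := by
      intro c hc
      obtain ⟨-, -, h1, -, -⟩ := hfact c hc
      have h1' := hd1 c hc
      linear_combination h1 - hβ1 - h1'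
    have hquad : ∀ t ∈ (fun c => f₂ c - f₂ c₀) '' S,
        (-(lam * f₁ c₀) - f₂ c₀ + (lam + 1) * f₃ c₀) * t + (-(lam ^ 2 + lam + 1)) * t ^ 2 = 0 := by
      rintro t ⟨c, hc, rfl⟩
      obtain ⟨-, -, -, hE, -⟩ := hfact c hc
      have h1 := hd1 c hc
      have h3 := hd3 c hc
      linear_combination hE - hβ2
        - (f₂ c + f₃ c₀ - (1 + lam) * (f₂ c - f₂ c₀)) * h1
        - (f₂ c + f₁ c) * h3
    have hinj : Set.InjOn (fun c => f₂ c - f₂ c₀) S := by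
      intro c hc c' hc' hcc
      simp only at hcc
      have e2 : f₂ c = f₂ c' := by linear_combination hcc
      have e1 : f₁ c = f₁ c' := by rw [hd1 c hc, hd1 c' hc', hcc]
      have e3 : f₃ c = f₃ c' := by rw [hd3 c hc, hd3 c' hc', hcc]
      obtain ⟨-, -, -, -, hp⟩ := hfact c hc
      obtain ⟨-, -, -, -, hp'⟩ := hfact c' hc'
      rw [e1, e2, e3] at hp
      linear_combination hp - hp'
    have hT : ((fun c => f₂ c - f₂ c₀) '' S).Infinite := Set.Infinite.image hinj hinf
    have hμ := quad_param_aux hT _ _ hquad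
    have hlam2 : lam ^ 2 + lam + 1 = 0 := by linear_combination -hμ
    have hkey : (A₃ - A₂) ^ 2 + (A₃ - A₂) * (A₁ - A₃) + (A₁ - A₃) ^ 2 = 0 := by
      have := hlam2
      rw [hlam] at this
      field_simp at this
      have h2 : (A₁ - A₃) * ((A₃ - A₂) ^ 2 + (A₃ - A₂) * (A₁ - A₃) + (A₁ - A₃) ^ 2) = 0 := by
        linear_combination (A₁ - A₃) * this
      exact (mul_eq_zero.mp h2).resolve_left h13'
    linear_combination (1 / 3) * (A₁ + A₂ + A₃) * hs₁ - (1 / 3) * hkey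
end
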